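/- arXiv:1011.5159 — 2 statements merged into one kernel-verified Lean document; each statement's English description precedes it below -/
import Mathlib

section
/- Let L be a left ideal of the n-th Weyl algebra W and F a finite subset of L. Then the set 𝔙_L(F) of all normal orderings ≼ of W such that F is a Gröbner basis of L with respect to ≼ is an open subset of NO(N). -/
/-- A total ordering on `S`: an antisymmetric, transitive and total binary relation. -/
def IsTotalOrdering {S : Type*} (r : S → S → Prop) : Prop :=
  (∀ a b, r a b → r b a → a = b) ∧ (∀ a b c, r a b → r b c → r a c) ∧ (∀ a b, r a b ∨ r b a)

/-- `TO S` is the set of all total orderings on `S`. -/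
def TO (S : Type*) : Type _ := {r : S → S → Prop // IsTotalOrdering r}

/-- The underlying relation of a total ordering. -/
def TO.rel {S : Type*} (r : TO S) : S → S → Prop := Subtype.val r

/-- The subbasic open set `𝔘_{(a,b)} = {≼ ∈ TO(S) : a ≼ b}`. -/
def USet {S : Type*} (a b : S) : Set (TO S) := {r | r.rel a b}

/-- The topology `𝒰` on `TO S`: the coarsest topology for which all `𝔘_{(a,b)}` are open. -/
instance TOTop (S : Type*) : TopologicalSpace (TO S) :=
  TopologicalSpace.generateFrom {U | ∃ a b, U = USet a b}


open MvPolynomial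

section Weyl

variable {K : Type*} [Field K] {n : ℕ} {W : Type*} [Ring W] [Algebra K W]

/-- The normal monomial `ξ^λ ∂^μ` of the Weyl algebra, for generators `ξ i` and `∂ i`. -/
def nm (ξ dd : Fin n → W) (lam mu : Fin n → ℕ) : W :=
  (List.ofFn fun i => ξ i ^ lam i).prod * (List.ofFn fun i => dd i ^ mu i).prod

/-- The set `N` of normal monomials `ξ^λ ∂^μ` of the Weyl algebra. -/
def NormalMonomials (ξ dd : Fin n → W) : Set W := {w | ∃ lam mu, w = nm ξ dd lam mu}

/-- The normal monomial `ξ^λ ∂^μ` as an element of `N`. -/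
def nmEl (ξ dd : Fin n → W) (lam mu : Fin n → ℕ) : ↥(NormalMonomials ξ dd) :=
  ⟨nm ξ dd lam mu, lam, mu, rfl⟩

/-- A normal ordering of the Weyl algebra: a total ordering `≼` on `N` such that
`1 = ξ^0∂^0 ≼ ξ^λ∂^μ` for all `λ, μ`, and which is compatible with the addition of
exponents. -/
def IsNormalOrdering (ξ dd : Fin n → W) (r : TO ↥(NormalMonomials ξ dd)) : Prop :=
  (∀ lam mu, r.rel (nmEl ξ dd 0 0) (nmEl ξ dd lam mu)) ∧
  ∀ lam mu rho sig al be : Fin n → ℕ,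
    r.rel (nmEl ξ dd lam mu) (nmEl ξ dd rho sig) →
      r.rel (nmEl ξ dd (lam + al) (mu + be)) (nmEl ξ dd (rho + al) (sig + be))

/-- The set `NO(N)` of all normal orderings. -/
def NOSet (ξ dd : Fin n → W) : Set (TO ↥(NormalMonomials ξ dd)) :=
  {r | IsNormalOrdering ξ dd r}

/-- The exponent vector `(λ, μ)` as a finitely supported function on `Fin n ⊕ Fin n`. -/
noncomputable def expof {n : ℕ} (lam mu : Fin n → ℕ) : (Fin n ⊕ Fin n) →₀ ℕ :=
  Finsupp.equivFunOnFinite.symm (Sum.elim lam mu)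

/-- The normal monomial of `N` corresponding to an exponent vector `d`. -/
noncomputable def nmD (ξ dd : Fin n → W) (d : (Fin n ⊕ Fin n) →₀ ℕ) :
    ↥(NormalMonomials ξ dd) :=
  nmEl ξ dd (fun i => d (Sum.inl i)) (fun i => d (Sum.inr i))

/-- The ordering on exponent vectors induced by a total ordering `r` on `N`. -/
noncomputable def rD (ξ dd : Fin n → W) (r : TO ↥(NormalMonomials ξ dd))
    (d e : (Fin n ⊕ Fin n) →₀ ℕ) : Prop :=
  r.rel (nmD ξ dd d) (nmD ξ dd e)

/-- `IsLTerm ξ dd Φ r w d` says that the exponent vector `d`, i.e. the normal monomial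
`ξ^λ∂^μ` with `(λ,μ) = d`, is the `r`-greatest element of the support of `w`, that is,
`lt_≼(w) = ξ^λ∂^μ` (equivalently `LT_≼(w) = X^λY^μ`). -/
noncomputable def IsLTerm (ξ dd : Fin n → W)
    (Φ : W ≃ₗ[K] MvPolynomial (Fin n ⊕ Fin n) K) (r : TO ↥(NormalMonomials ξ dd))
    (w : W) (d : (Fin n ⊕ Fin n) →₀ ℕ) : Prop :=
  d ∈ (Φ w).support ∧ ∀ c ∈ (Φ w).support, rD ξ dd r c d

/-- The ideal `LT_≼(L) = ⟨LT_≼(x) : x ∈ L, x ≠ 0⟩` of `K[X,Y]`. -/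
noncomputable def LTIdeal (ξ dd : Fin n → W)
    (Φ : W ≃ₗ[K] MvPolynomial (Fin n ⊕ Fin n) K) (r : TO ↥(NormalMonomials ξ dd))
    (L : Set W) : Ideal (MvPolynomial (Fin n ⊕ Fin n) K) :=
  Ideal.span {p | ∃ x ∈ L, x ≠ 0 ∧ ∃ d, IsLTerm ξ dd Φ r x d ∧ p = monomial d 1}

/-- `B` is a Gröbner basis of the left ideal `L` with respect to `r`: `B` is a finite
subset of `L` with `L = Σ_{b∈B} W·b` and `LT_≼(L) = ⟨LT_≼(b) : b ∈ B, b ≠ 0⟩`. -/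
noncomputable def IsGroebnerBasis (ξ dd : Fin n → W)
    (Φ : W ≃ₗ[K] MvPolynomial (Fin n ⊕ Fin n) K) (r : TO ↥(NormalMonomials ξ dd))
    (L : Submodule W W) (B : Finset W) : Prop :=
  (B : Set W) ⊆ (L : Set W) ∧ Submodule.span W (B : Set W) = L ∧
  LTIdeal ξ dd Φ r (L : Set W) =
    Ideal.span {p | ∃ b ∈ B, b ≠ 0 ∧ ∃ d, IsLTerm ξ dd Φ r b d ∧ p = monomial d 1}

end Weyl

namespace GBAux

open MvPolynomial Finsupp

section ProdPow

variable {W : Type*} [Ring W] {m : ℕ}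

/-- Ordered product of powers `g 0 ^ a 0 * ⋯ * g (m-1) ^ a (m-1)`. -/
def prodPow (g : Fin m → W) (a : Fin m → ℕ) : W :=
  (List.ofFn fun i => g i ^ a i).prod

lemma prodPow_succ {m : ℕ} (g : Fin (m + 1) → W) (a : Fin (m + 1) → ℕ) :
    prodPow g a = g 0 ^ a 0 * prodPow (g ∘ Fin.succ) (a ∘ Fin.succ) := by
  simp [prodPow, List.ofFn_succ, Function.comp]

lemma prodPow_zero (g : Fin m → W) : prodPow g 0 = 1 := by
  apply List.prod_eq_one
  intro x hx
  rw [List.mem_ofFn] at hx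
  obtain ⟨i, rfl⟩ := hx
  simp

lemma commute_prodPow (x : W) (g : Fin m → W) (a : Fin m → ℕ)
    (h : ∀ i, Commute x (g i)) : Commute x (prodPow g a) := by
  apply Commute.list_prod_right
  intro y hy
  rw [List.mem_ofFn] at hy
  obtain ⟨i, rfl⟩ := hy
  exact (h i).pow_right _

lemma prodPow_add (g : Fin m → W) (hg : ∀ i j, Commute (g i) (g j))
    (a b : Fin m → ℕ) : prodPow g (a + b) = prodPow g a * prodPow g b := by
  induction m with
  | zero => simp [prodPow]
  | succ m ih =>
    rw [prodPow_succ, prodPow_succ g a, prodPow_succ g b]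
    have hg' : ∀ i j, Commute ((g ∘ Fin.succ) i) ((g ∘ Fin.succ) j) :=
      fun i j => hg _ _
    have h1 : ((a + b) = fun i => a i + b i) := rfl
    have : prodPow (g ∘ Fin.succ) ((a + b) ∘ Fin.succ)
        = prodPow (g ∘ Fin.succ) (a ∘ Fin.succ) * prodPow (g ∘ Fin.succ) (b ∘ Fin.succ) := by
      have : (a + b) ∘ Fin.succ = (a ∘ Fin.succ) + (b ∘ Fin.succ) := rfl
      rw [this, ih _ hg']
    rw [this]
    have hcomm : Commute (g 0 ^ b 0) (prodPow (g ∘ Fin.succ) (a ∘ Fin.succ)) :=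
      commute_prodPow _ _ _ (fun i => ((hg 0 i.succ).pow_left _).symm.symm)
    have : (a + b) 0 = a 0 + b 0 := rfl
    rw [this, pow_add]
    rw [mul_assoc, mul_assoc, ← mul_assoc (g 0 ^ b 0), hcomm.eq, mul_assoc]

lemma prodPow_single (g : Fin m → W) (i : Fin m) :
    prodPow g (Pi.single i 1) = g i := by
  induction m with
  | zero => exact i.elim0
  | succ m ih =>
    rw [prodPow_succ]
    refine Fin.cases ?_ ?_ i
    · have h1 : (Pi.single (0 : Fin (m + 1)) (1 : ℕ) : Fin (m+1) → ℕ) 0 = 1 := Pi.single_eq_same _ _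
      have h2 : (Pi.single (0 : Fin (m + 1)) (1 : ℕ)) ∘ Fin.succ = 0 := by
        funext j; exact Pi.single_eq_of_ne (Fin.succ_ne_zero j) _
      rw [h1, h2, prodPow_zero, pow_one, mul_one]
    · intro i'
      have h1 : (Pi.single (Fin.succ i') (1 : ℕ) : Fin (m+1) → ℕ) 0 = 0 :=
        Pi.single_eq_of_ne (Fin.succ_ne_zero i').symm _
      have h2 : (Pi.single (Fin.succ i') (1 : ℕ)) ∘ Fin.succ = Pi.single i' 1 := by
        funext j
        by_cases hj : j = i'
        · subst hj; simp
        · rw [Function.comp_apply, Pi.single_eq_of_ne hj,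
            Pi.single_eq_of_ne (fun h => hj (Fin.succ_injective _ h))]
      rw [h1, h2, ih, pow_zero, one_mul]
      rfl

lemma pow_der' (g x : W) (hx : x * g = g * x + 1) :
    ∀ M : ℕ, x * g ^ (M + 1) = g ^ (M + 1) * x + (M + 1 : ℕ) * g ^ M := by
  intro M
  induction M with
  | zero => simpa using hx
  | succ M ih =>
    have hc : ((M + 1 + 1 : ℕ) : W) = ((M + 1 : ℕ) : W) + 1 := by push_cast; ring
    calc x * g ^ (M + 1 + 1) = (x * g ^ (M + 1)) * g := by rw [mul_assoc, ← pow_succ]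
      _ = (g ^ (M + 1) * x + ((M + 1 : ℕ) : W) * g ^ M) * g := by rw [ih]
      _ = g ^ (M + 1) * (x * g) + ((M + 1 : ℕ) : W) * g ^ (M + 1) := by
          rw [add_mul, mul_assoc, mul_assoc, ← pow_succ]
      _ = g ^ (M + 1 + 1) * x + (g ^ (M + 1) + ((M + 1 : ℕ) : W) * g ^ (M + 1)) := by
          rw [hx, mul_add, mul_one, ← mul_assoc, ← pow_succ, add_assoc]
      _ = g ^ (M + 1 + 1) * x + ((M + 1 + 1 : ℕ) : W) * g ^ (M + 1) := by
          rw [hc, add_mul, one_mul, add_comm (g ^ (M + 1))]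

lemma pow_der (g x : W) (hx : x * g = g * x + 1) (M : ℕ) :
    x * g ^ M = g ^ M * x + (M : ℕ) * g ^ (M - 1) := by
  cases M with
  | zero => simp
  | succ M => simpa using pow_der' g x hx M

lemma der_prodPow (g : Fin m → W) (hg : ∀ i j, Commute (g i) (g j)) (x : W)
    (i : Fin m) (hxi : x * g i = g i * x + 1) (hxj : ∀ j, j ≠ i → Commute x (g j))
    (a : Fin m → ℕ) :
    x * prodPow g a = prodPow g a * x
      + (a i : W) * prodPow g (Function.update a i (a i - 1)) := by
  induction m with
  | zero => exact i.elim0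
  | succ m ih =>
    have hg' : ∀ i j, Commute ((g ∘ Fin.succ) i) ((g ∘ Fin.succ) j) := fun i j => hg _ _
    rw [prodPow_succ g a]
    refine Fin.cases ?_ ?_ i hxi hxj
    · intro hxi hxj
      have hxB : Commute x (prodPow (g ∘ Fin.succ) (a ∘ Fin.succ)) :=
        commute_prodPow _ _ _ (fun j => hxj j.succ (Fin.succ_ne_zero j))
      have hupd0 : (Function.update a 0 (a 0 - 1)) 0 = a 0 - 1 :=
        Function.update_self _ _ _
      have hupds : (Function.update a (0 : Fin (m+1)) (a 0 - 1)) ∘ Fin.succ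
          = a ∘ Fin.succ := by
        funext j
        exact Function.update_of_ne (Fin.succ_ne_zero j) _ _
      rw [prodPow_succ g (Function.update a 0 (a 0 - 1)), hupd0, hupds]
      set B := prodPow (g ∘ Fin.succ) (a ∘ Fin.succ) with hB
      calc x * (g 0 ^ a 0 * B) = (x * g 0 ^ a 0) * B := (mul_assoc _ _ _).symm
        _ = (g 0 ^ a 0 * x + (a 0 : W) * g 0 ^ (a 0 - 1)) * B := by
            rw [pow_der _ _ hxi]
        _ = g 0 ^ a 0 * (x * B) + (a 0 : W) * (g 0 ^ (a 0 - 1) * B) := by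
            rw [add_mul, mul_assoc, mul_assoc]
        _ = g 0 ^ a 0 * B * x + (a 0 : W) * (g 0 ^ (a 0 - 1) * B) := by
            rw [hxB.eq, ← mul_assoc]
    · intro i' hxi hxj
      have hxi' : x * (g ∘ Fin.succ) i' = (g ∘ Fin.succ) i' * x + 1 := hxi
      have hxj' : ∀ j, j ≠ i' → Commute x ((g ∘ Fin.succ) j) := fun j hj =>
        hxj j.succ (fun h => hj (Fin.succ_injective _ h))
      have ihs := ih (g ∘ Fin.succ) hg' i' hxi' hxj' (a ∘ Fin.succ)
      have hx0 : Commute x (g 0 ^ a 0) :=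
        ((hxj 0 (Fin.succ_ne_zero i').symm)).pow_right _
      have hupd0 : (Function.update a i'.succ (a i'.succ - 1)) 0 = a 0 :=
        Function.update_of_ne (Fin.succ_ne_zero i').symm _ _
      have hupds : (Function.update a i'.succ (a i'.succ - 1)) ∘ Fin.succ
          = Function.update (a ∘ Fin.succ) i' ((a ∘ Fin.succ) i' - 1) := by
        funext j
        by_cases hj : j = i'
        · subst hj; simp
        · rw [Function.comp_apply,
            Function.update_of_ne (fun h => hj (Fin.succ_injective _ h)) _ _,
            Function.update_of_ne hj]
          rfl
      rw [prodPow_succ g (Function.update a i'.succ (a i'.succ - 1)), hupd0, hupds]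
      set B := prodPow (g ∘ Fin.succ) (a ∘ Fin.succ) with hB
      set B' := prodPow (g ∘ Fin.succ)
        (Function.update (a ∘ Fin.succ) i' ((a ∘ Fin.succ) i' - 1)) with hB'
      have hcast : Commute ((a i'.succ : ℕ) : W) (g 0 ^ a 0) := Nat.cast_commute _ _
      calc x * (g 0 ^ a 0 * B) = (x * g 0 ^ a 0) * B := (mul_assoc _ _ _).symm
        _ = g 0 ^ a 0 * (x * B) := by rw [hx0.eq, mul_assoc]
        _ = g 0 ^ a 0 * (B * x + ((a i'.succ : ℕ) : W) * B') := by rw [ihs]; rfl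
        _ = g 0 ^ a 0 * B * x + (g 0 ^ a 0 * ((a i'.succ : ℕ) : W)) * B' := by
            rw [mul_add, ← mul_assoc, ← mul_assoc]
        _ = g 0 ^ a 0 * B * x + ((a i'.succ : ℕ) : W) * (g 0 ^ a 0 * B') := by
            rw [← hcast.eq, mul_assoc ((a i'.succ : ℕ) : W)]

end ProdPow

section Weyl2

variable {K : Type*} [Field K] {n : ℕ} {W : Type*} [Ring W] [Algebra K W]
variable (ξ dd : Fin n → W)

/-- Exponent lemmas -/
lemma expof_apply {n : ℕ} (lam mu : Fin n → ℕ) (s : Fin n ⊕ Fin n) :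
    expof lam mu s = Sum.elim lam mu s := by
  simp [expof]

lemma expof_add {n : ℕ} (a b c d : Fin n → ℕ) :
    expof (a + c) (b + d) = expof a b + expof c d := by
  ext s
  cases s <;> simp [expof_apply]

lemma expof_eIn_eOut {n : ℕ} (d : (Fin n ⊕ Fin n) →₀ ℕ) :
    expof (fun i => d (Sum.inl i)) (fun i => d (Sum.inr i)) = d := by
  ext s
  cases s <;> simp [expof_apply]

lemma expof_inj {n : ℕ} {a b c d : Fin n → ℕ} (h : expof a b = expof c d) :
    a = c ∧ b = d := by
  constructor
  · funext i
    have := congrArg (fun f => f (Sum.inl i)) h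
    simpa [expof_apply] using this
  · funext i
    have := congrArg (fun f => f (Sum.inr i)) h
    simpa [expof_apply] using this

lemma expof_diag_ne_zero {n : ℕ} {k : Fin n → ℕ} (hk : k ≠ 0) :
    expof k k ≠ 0 := by
  intro h
  apply hk
  funext i
  have := congrArg (fun f => f (Sum.inl i)) h
  simpa [expof_apply] using this

lemma nm_eq_prodPow (lam mu : Fin n → ℕ) :
    nm ξ dd lam mu = prodPow ξ lam * prodPow dd mu := rfl

lemma xi_commute (hξcomm : ∀ i j, ξ i * ξ j = ξ j * ξ i) :
    ∀ i j, Commute (ξ i) (ξ j) := fun i j => hξcomm i j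

lemma dd_commute (hddcomm : ∀ i j, dd i * dd j = dd j * dd i) :
    ∀ i j, Commute (dd i) (dd j) := fun i j => hddcomm i j

lemma dd_xi_ne (hrel : ∀ i j, dd i * ξ j - ξ j * dd i = if i = j then (1 : W) else 0) (i j : Fin n) (h : j ≠ i) : Commute (dd i) (ξ j) := by
  have := hrel i j
  rw [if_neg (fun hh => h hh.symm), sub_eq_zero] at this
  exact this

lemma dd_xi (hrel : ∀ i j, dd i * ξ j - ξ j * dd i = if i = j then (1 : W) else 0) (i : Fin n) : dd i * ξ i = ξ i * dd i + 1 := by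
  have := hrel i i
  rw [if_pos rfl, sub_eq_iff_eq_add] at this
  rw [this, add_comm]

/-- derivation formula for `dd i` against a normal monomial. -/
lemma D_nm (hξcomm : ∀ i j, ξ i * ξ j = ξ j * ξ i)
    (hddcomm : ∀ i j, dd i * dd j = dd j * dd i)
    (hrel : ∀ i j, dd i * ξ j - ξ j * dd i = if i = j then (1 : W) else 0)
    (i : Fin n) (lam mu : Fin n → ℕ) :
    dd i * nm ξ dd lam mu
      = nm ξ dd lam (Pi.single i 1 + mu)
        + ((lam i : ℕ) : W) * nm ξ dd (Function.update lam i (lam i - 1)) mu := by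
  have hD : dd i * prodPow ξ lam = prodPow ξ lam * dd i
      + ((lam i : ℕ) : W) * prodPow ξ (Function.update lam i (lam i - 1)) :=
    der_prodPow ξ (xi_commute ξ hξcomm) (dd i) i (dd_xi ξ dd hrel i)
      (fun j hj => dd_xi_ne ξ dd hrel i j hj) lam
  have hQ : dd i * prodPow dd mu = prodPow dd (Pi.single i 1 + mu) := by
    rw [prodPow_add dd (dd_commute dd hddcomm), prodPow_single]
  rw [nm_eq_prodPow, nm_eq_prodPow, nm_eq_prodPow, ← mul_assoc, hD, add_mul,
    mul_assoc (prodPow ξ lam), hQ, mul_assoc]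

variable (Φ : W ≃ₗ[K] MvPolynomial (Fin n ⊕ Fin n) K)

lemma symm_monomial
    (hΦ : ∀ lam mu, Φ (nm ξ dd lam mu) = MvPolynomial.monomial (expof lam mu) 1) (lam mu : Fin n → ℕ) (b : K) :
    Φ.symm (monomial (expof lam mu) b) = b • nm ξ dd lam mu := by
  have h1 : monomial (expof lam mu) b = b • monomial (expof lam mu) (1 : K) := by
    rw [MvPolynomial.smul_monomial, smul_eq_mul, mul_one]
  rw [h1, map_smul, ← hΦ, LinearEquiv.symm_apply_apply]

/-- `q` only involves monomials that are "diagonally strictly below" `(lam, mu)`. -/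
def Below (lam mu : Fin n → ℕ) (q : MvPolynomial (Fin n ⊕ Fin n) K) : Prop :=
  ∀ c ∈ q.support, ∃ lam' mu' kap : Fin n → ℕ,
    kap ≠ 0 ∧ c = expof lam' mu' ∧ lam' + kap = lam ∧ mu' + kap = mu

lemma below_add {lam mu : Fin n → ℕ} {q₁ q₂ : MvPolynomial (Fin n ⊕ Fin n) K}
    (h1 : Below lam mu q₁) (h2 : Below lam mu q₂) : Below lam mu (q₁ + q₂) := by
  intro c hc
  have := Finsupp.support_add hc
  rw [Finset.mem_union] at this
  rcases this with h | h
  · exact h1 c h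
  · exact h2 c h

lemma below_zero (lam mu : Fin n → ℕ) : Below (K := K) lam mu 0 := by
  intro c hc
  simp at hc

lemma below_smul {lam mu : Fin n → ℕ} {q : MvPolynomial (Fin n ⊕ Fin n) K}
    (h : Below lam mu q) (b : K) : Below lam mu (b • q) := by
  intro c hc
  exact h c (Finsupp.support_smul hc)

lemma below_monomial {lam mu lam' mu' kap : Fin n → ℕ} (b : K)
    (hkap : kap ≠ 0) (hl : lam' + kap = lam) (hm : mu' + kap = mu) :
    Below lam mu (monomial (expof lam' mu') b) := by
  intro c hc
  have := MvPolynomial.support_monomial_subset hc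
  rw [Finset.mem_singleton] at this
  exact ⟨lam', mu', kap, hkap, this, hl, hm⟩

lemma below_D
    (hξcomm : ∀ i j, ξ i * ξ j = ξ j * ξ i)
    (hddcomm : ∀ i j, dd i * dd j = dd j * dd i)
    (hrel : ∀ i j, dd i * ξ j - ξ j * dd i = if i = j then (1 : W) else 0)
    (hΦ : ∀ lam mu, Φ (nm ξ dd lam mu) = MvPolynomial.monomial (expof lam mu) 1)
    (i : Fin n) (lam mu : Fin n → ℕ) (q : MvPolynomial (Fin n ⊕ Fin n) K) :
    Below lam mu q → Below lam (Pi.single i 1 + mu) (Φ (dd i * Φ.symm q)) := by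
  induction q using AddMonoidAlgebra.induction with
  | zero =>
    intro _
    rw [map_zero, mul_zero, map_zero]
    exact below_zero _ _
  | single_add a b f haf hb ihf =>
    intro hq
    have hsupp : MvPolynomial.support (AddMonoidAlgebra.single a b + f) = {a} ∪ MvPolynomial.support f := by
      show (AddMonoidAlgebra.single _ b + f).coeff.support = _
      rw [AddMonoidAlgebra.coeff_add, AddMonoidAlgebra.coeff_single, Finsupp.support_add_eq, Finsupp.support_single_ne_zero _ hb]
      · rfl
      rw [Finsupp.support_single_ne_zero _ hb]
      simpa using haf
    have hmem : a ∈ MvPolynomial.support (AddMonoidAlgebra.single a b + f) := by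
      rw [hsupp]; exact Finset.mem_union_left _ (Finset.mem_singleton_self a)
    obtain ⟨lam', mu', kap, hkap, haeq, hl, hm⟩ := hq a hmem
    have hqf : Below lam mu f := by
      intro c hc
      have hc' : c ∈ MvPolynomial.support (AddMonoidAlgebra.single a b + f) := by
        rw [hsupp]; exact Finset.mem_union_right _ hc
      exact hq c hc'
    have key : (AddMonoidAlgebra.single a b : MvPolynomial (Fin n ⊕ Fin n) K) = monomial a b :=
      MvPolynomial.single_eq_monomial a b
    rw [key, map_add, mul_add, map_add]
    apply below_add
    · -- monomial part
      rw [haeq, symm_monomial ξ dd Φ hΦ, mul_smul_comm, map_smul,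
        D_nm ξ dd hξcomm hddcomm hrel, map_add, hΦ]
      apply below_smul
      apply below_add
      · refine below_monomial _ hkap hl ?_
        rw [add_assoc, hm]
      · by_cases hli : lam' i = 0
        · have : ((lam' i : ℕ) : W) = 0 := by rw [hli]; simp
          rw [this, zero_mul, map_zero]
          exact below_zero _ _
        · have hc : ((lam' i : ℕ) : W) * nm ξ dd (Function.update lam' i (lam' i - 1)) mu'
              = (lam' i) • nm ξ dd (Function.update lam' i (lam' i - 1)) mu' := by
            rw [nsmul_eq_mul]
          rw [hc, map_nsmul, hΦ]
          have hsub : ((lam' i) • (monomial (expof (Function.update lam' i (lam' i - 1)) mu') (1 : K))).support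
              ⊆ (monomial (expof (Function.update lam' i (lam' i - 1)) mu') (1 : K)).support :=
            Finsupp.support_smul
          intro c hcmem
          have hc2 := MvPolynomial.support_monomial_subset (hsub hcmem)
          rw [Finset.mem_singleton] at hc2
          refine ⟨Function.update lam' i (lam' i - 1), mu', kap + Pi.single i 1, ?_, hc2, ?_, ?_⟩
          · intro h
            have := congrFun h i
            simp at this
          · funext j
            have hj := congrFun hl j
            simp only [Pi.add_apply] at hj
            by_cases hji : j = i
            · subst hji
              simp only [Function.update_self, Pi.add_apply, Pi.single_eq_same]
              omega
            · simp only [Function.update_of_ne hji, Pi.add_apply,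
                Pi.single_eq_of_ne hji, add_zero]
              omega
          · funext j
            have hj := congrFun hm j
            simp only [Pi.add_apply] at hj
            by_cases hji : j = i
            · subst hji
              simp only [Pi.add_apply, Pi.single_eq_same]
              omega
            · simp only [Pi.add_apply, Pi.single_eq_of_ne hji]
              omega
    · exact ihf hqf

lemma QP
    (hξcomm : ∀ i j, ξ i * ξ j = ξ j * ξ i)
    (hddcomm : ∀ i j, dd i * dd j = dd j * dd i)
    (hrel : ∀ i j, dd i * ξ j - ξ j * dd i = if i = j then (1 : W) else 0)
    (hΦ : ∀ lam mu, Φ (nm ξ dd lam mu) = MvPolynomial.monomial (expof lam mu) 1) :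
    ∀ (N : ℕ) (mu lam : Fin n → ℕ), (∑ i, mu i) = N →
    ∃ q, Below (K := K) lam mu q ∧
      prodPow dd mu * prodPow ξ lam = nm ξ dd lam mu + Φ.symm q := by
  intro N
  induction N with
  | zero =>
    intro mu lam h0
    have hmu : mu = 0 := by
      funext i
      have := (Finset.sum_eq_zero_iff.mp h0) i (Finset.mem_univ i)
      exact this
    subst hmu
    refine ⟨0, below_zero _ _, ?_⟩
    rw [map_zero, add_zero, prodPow_zero, one_mul, nm_eq_prodPow, prodPow_zero, mul_one]
  | succ N ih =>
    intro mu lam hN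
    have hne : ∑ i, mu i ≠ 0 := by rw [hN]; exact Nat.succ_ne_zero N
    obtain ⟨i, _, hi⟩ := Finset.exists_ne_zero_of_sum_ne_zero hne
    set mu'' := Function.update mu i (mu i - 1) with hmu''
    have hmu : mu = Pi.single i 1 + mu'' := by
      funext j
      by_cases hji : j = i
      · subst hji
        simp only [Pi.add_apply, Pi.single_eq_same, hmu'', Function.update_self]
        omega
      · simp only [Pi.add_apply, Pi.single_eq_of_ne hji, hmu'', Function.update_of_ne hji,
          zero_add]
    have hsum : ∑ j, mu'' j = N := by
      have h1 : ∑ j, mu j = (∑ j, Pi.single i 1 j) + ∑ j, mu'' j := by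
        conv_lhs => rw [hmu]
        exact Finset.sum_add_distrib
      have h2 : ∑ j, (Pi.single i (1 : ℕ)) j = 1 := by
        rw [Finset.sum_pi_single']
        simp
      omega
    obtain ⟨q₁, hq₁, hQP⟩ := ih mu'' lam hsum
    have hDmu : prodPow dd mu = dd i * prodPow dd mu'' := by
      conv_lhs => rw [hmu]
      rw [prodPow_add dd (dd_commute dd hddcomm), prodPow_single]
    refine ⟨monomial (expof (Function.update lam i (lam i - 1)) mu'') ((lam i : ℕ) : K)
      + Φ (dd i * Φ.symm q₁), ?_, ?_⟩
    · apply below_add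
      · by_cases hli : lam i = 0
        · have : ((lam i : ℕ) : K) = 0 := by rw [hli]; simp
          rw [this, monomial_zero]
          exact below_zero _ _
        · refine below_monomial _ (kap := Pi.single i 1) ?_ ?_ ?_
          · intro h
            have := congrFun h i
            simp at this
          · funext j
            by_cases hji : j = i
            · subst hji
              simp only [Function.update_self, Pi.add_apply, Pi.single_eq_same]
              omega
            · simp only [Function.update_of_ne hji, Pi.add_apply, Pi.single_eq_of_ne hji]
              omega
          · rw [hmu]
            funext j
            by_cases hji : j = i
            · subst hji
              simp only [Pi.add_apply, Pi.single_eq_same, hmu'']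
              omega
            · simp only [Pi.add_apply, Pi.single_eq_of_ne hji, hmu'']
              omega
      · have := below_D ξ dd Φ hξcomm hddcomm hrel hΦ i lam mu'' q₁ hq₁
        rw [← hmu] at this
        exact this
    · rw [hDmu, mul_assoc, hQP, mul_add]
      have hD := D_nm ξ dd hξcomm hddcomm hrel i lam mu''
      rw [hD, map_add]
      have e1 : nm ξ dd lam (Pi.single i 1 + mu'') = nm ξ dd lam mu := by rw [← hmu]
      have e2 : Φ.symm (monomial (expof (Function.update lam i (lam i - 1)) mu'')
          ((lam i : ℕ) : K)) = ((lam i : ℕ) : W) * nm ξ dd (Function.update lam i (lam i - 1)) mu'' := by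
        rw [symm_monomial ξ dd Φ hΦ, Nat.cast_smul_eq_nsmul, nsmul_eq_mul]
      rw [e1, e2, LinearEquiv.symm_apply_apply, add_assoc]

lemma below_sandwich
    (hξcomm : ∀ i j, ξ i * ξ j = ξ j * ξ i)
    (hddcomm : ∀ i j, dd i * dd j = dd j * dd i)
    (hΦ : ∀ lam mu, Φ (nm ξ dd lam mu) = MvPolynomial.monomial (expof lam mu) 1)
    (al mu lam be : Fin n → ℕ) (q₁ : MvPolynomial (Fin n ⊕ Fin n) K) :
    Below lam be q₁ →
    ∀ c ∈ (Φ (prodPow ξ al * Φ.symm q₁ * prodPow dd mu)).support,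
      ∃ kap : Fin n → ℕ, kap ≠ 0 ∧ c + expof kap kap = expof (al + lam) (be + mu) := by
  induction q₁ using AddMonoidAlgebra.induction with
  | zero =>
    intro _ c hc
    rw [map_zero, mul_zero, zero_mul, map_zero] at hc
    simp at hc
  | single_add a b f haf hb ihf =>
    intro hq c hc
    have hsupp : MvPolynomial.support (AddMonoidAlgebra.single a b + f) = {a} ∪ MvPolynomial.support f := by
      show (AddMonoidAlgebra.single _ b + f).coeff.support = _
      rw [AddMonoidAlgebra.coeff_add, AddMonoidAlgebra.coeff_single, Finsupp.support_add_eq, Finsupp.support_single_ne_zero _ hb]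
      · rfl
      rw [Finsupp.support_single_ne_zero _ hb]
      simpa using haf
    have hmem : a ∈ MvPolynomial.support (AddMonoidAlgebra.single a b + f) := by
      rw [hsupp]; exact Finset.mem_union_left _ (Finset.mem_singleton_self a)
    obtain ⟨lam', mu', kap, hkap, haeq, hl, hm⟩ := hq a hmem
    have hqf : Below lam be f := by
      intro x hx
      have hx' : x ∈ MvPolynomial.support (AddMonoidAlgebra.single a b + f) := by
        rw [hsupp]; exact Finset.mem_union_right _ hx
      exact hq x hx'
    have key : (AddMonoidAlgebra.single a b : MvPolynomial (Fin n ⊕ Fin n) K) = monomial a b :=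
      MvPolynomial.single_eq_monomial a b
    rw [key, map_add, mul_add, add_mul, map_add] at hc
    have := Finsupp.support_add hc
    rw [Finset.mem_union] at this
    rcases this with h | h
    · -- the single part
      have hprod : prodPow ξ al * Φ.symm (monomial a b) * prodPow dd mu
          = b • nm ξ dd (al + lam') (mu' + mu) := by
        rw [haeq, symm_monomial ξ dd Φ hΦ, mul_smul_comm, smul_mul_assoc]
        congr 1
        rw [nm_eq_prodPow, nm_eq_prodPow, prodPow_add ξ (xi_commute ξ hξcomm),
          prodPow_add dd (dd_commute dd hddcomm)]
        simp only [mul_assoc]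
      rw [hprod, map_smul, hΦ] at h
      have h2 := MvPolynomial.support_monomial_subset (MvPolynomial.support_smul h)
      rw [Finset.mem_singleton] at h2
      refine ⟨kap, hkap, ?_⟩
      rw [h2, ← expof_add]
      congr 1
      · funext j
        have hj := congrFun hl j
        simp only [Pi.add_apply] at hj ⊢
        omega
      · funext j
        have hj := congrFun hm j
        simp only [Pi.add_apply] at hj ⊢
        omega
    · exact ihf hqf c h

lemma nm_mul_nm
    (hξcomm : ∀ i j, ξ i * ξ j = ξ j * ξ i)
    (hddcomm : ∀ i j, dd i * dd j = dd j * dd i)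
    (hrel : ∀ i j, dd i * ξ j - ξ j * dd i = if i = j then (1 : W) else 0)
    (hΦ : ∀ lam mu, Φ (nm ξ dd lam mu) = MvPolynomial.monomial (expof lam mu) 1)
    (al be lam mu : Fin n → ℕ) :
    ∃ q : MvPolynomial (Fin n ⊕ Fin n) K,
      (∀ c ∈ q.support, ∃ kap : Fin n → ℕ, kap ≠ 0 ∧
        c + expof kap kap = expof (al + lam) (be + mu)) ∧
      nm ξ dd al be * nm ξ dd lam mu = nm ξ dd (al + lam) (be + mu) + Φ.symm q := by
  obtain ⟨q₁, hq₁, hQP⟩ := QP ξ dd Φ hξcomm hddcomm hrel hΦ (∑ i, be i) be lam rfl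
  refine ⟨Φ (prodPow ξ al * Φ.symm q₁ * prodPow dd mu), ?_, ?_⟩
  · exact below_sandwich ξ dd Φ hξcomm hddcomm hΦ al mu lam be q₁ hq₁
  · rw [nm_eq_prodPow ξ dd al be, nm_eq_prodPow ξ dd lam mu]
    have h1 : prodPow ξ al * prodPow dd be * (prodPow ξ lam * prodPow dd mu)
        = prodPow ξ al * (prodPow dd be * prodPow ξ lam) * prodPow dd mu := by
      rw [mul_assoc, mul_assoc, mul_assoc]
    rw [h1, hQP, mul_add, add_mul]
    congr 1
    · rw [nm_eq_prodPow, nm_eq_prodPow, prodPow_add ξ (xi_commute ξ hξcomm),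
        prodPow_add dd (dd_commute dd hddcomm)]
      simp only [mul_assoc]
    · rw [LinearEquiv.symm_apply_apply]

/-! ### Order theory -/

lemma nmD_val (d : (Fin n ⊕ Fin n) →₀ ℕ) :
    ((nmD ξ dd d : ↥(NormalMonomials ξ dd)) : W)
      = nm ξ dd (fun i => d (Sum.inl i)) (fun i => d (Sum.inr i)) := rfl

lemma Phi_nmD (hΦ : ∀ lam mu, Φ (nm ξ dd lam mu) = MvPolynomial.monomial (expof lam mu) 1)
    (d : (Fin n ⊕ Fin n) →₀ ℕ) :
    Φ ((nmD ξ dd d : ↥(NormalMonomials ξ dd)) : W) = monomial d 1 := by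
  rw [nmD_val, hΦ, expof_eIn_eOut]

lemma nmD_inj (hΦ : ∀ lam mu, Φ (nm ξ dd lam mu) = MvPolynomial.monomial (expof lam mu) 1)
    {d e : (Fin n ⊕ Fin n) →₀ ℕ} (h : nmD ξ dd d = nmD ξ dd e) : d = e := by
  have h2 : Φ ((nmD ξ dd d : ↥(NormalMonomials ξ dd)) : W)
      = Φ ((nmD ξ dd e : ↥(NormalMonomials ξ dd)) : W) := by rw [h]
  rw [Phi_nmD ξ dd Φ hΦ, Phi_nmD ξ dd Φ hΦ] at h2
  rcases (MvPolynomial.monomial_eq_monomial_iff _ _ _ _).mp h2 with h3 | h3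
  · exact h3.1
  · exact absurd h3.1 one_ne_zero

section OrderTheory

variable (r : TO ↥(NormalMonomials ξ dd))

lemma rD_refl (d : (Fin n ⊕ Fin n) →₀ ℕ) : rD ξ dd r d d :=
  (r.prop.2.2 (nmD ξ dd d) (nmD ξ dd d)).elim id id

lemma rD_trans {d e f : (Fin n ⊕ Fin n) →₀ ℕ} (h1 : rD ξ dd r d e) (h2 : rD ξ dd r e f) :
    rD ξ dd r d f := r.prop.2.1 _ _ _ h1 h2

lemma rD_total (d e : (Fin n ⊕ Fin n) →₀ ℕ) : rD ξ dd r d e ∨ rD ξ dd r e d :=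
  r.prop.2.2 _ _

lemma rD_antisymm (hΦ : ∀ lam mu, Φ (nm ξ dd lam mu) = MvPolynomial.monomial (expof lam mu) 1)
    {d e : (Fin n ⊕ Fin n) →₀ ℕ} (h1 : rD ξ dd r d e) (h2 : rD ξ dd r e d) : d = e :=
  nmD_inj ξ dd Φ hΦ (r.prop.1 _ _ h1 h2)

lemma nmD_eq_nmEl (d : (Fin n ⊕ Fin n) →₀ ℕ) :
    nmD ξ dd d = nmEl ξ dd (fun i => d (Sum.inl i)) (fun i => d (Sum.inr i)) := rfl

lemma nmD_add (d a : (Fin n ⊕ Fin n) →₀ ℕ) :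
    nmD ξ dd (d + a) = nmEl ξ dd
      ((fun i => d (Sum.inl i)) + (fun i => a (Sum.inl i)))
      ((fun i => d (Sum.inr i)) + (fun i => a (Sum.inr i))) := by
  have h1 : (fun i => (d + a) (Sum.inl i))
      = (fun i => d (Sum.inl i)) + (fun i => a (Sum.inl i)) := by funext i; simp
  have h2 : (fun i => (d + a) (Sum.inr i))
      = (fun i => d (Sum.inr i)) + (fun i => a (Sum.inr i)) := by funext i; simp
  rw [nmD_eq_nmEl, h1, h2]

lemma rD_zero (hr : IsNormalOrdering ξ dd r) (d : (Fin n ⊕ Fin n) →₀ ℕ) :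
    rD ξ dd r 0 d := by
  have h0 : nmD ξ dd (0 : (Fin n ⊕ Fin n) →₀ ℕ) = nmEl ξ dd 0 0 := by
    rw [nmD_eq_nmEl]
    congr 1 <;> funext i <;> simp
  have := hr.1 (fun i => d (Sum.inl i)) (fun i => d (Sum.inr i))
  rw [rD, h0]
  exact this

lemma rD_add_right (hr : IsNormalOrdering ξ dd r) {d e : (Fin n ⊕ Fin n) →₀ ℕ}
    (a : (Fin n ⊕ Fin n) →₀ ℕ) (h : rD ξ dd r d e) : rD ξ dd r (d + a) (e + a) := by
  have := hr.2 (fun i => d (Sum.inl i)) (fun i => d (Sum.inr i))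
    (fun i => e (Sum.inl i)) (fun i => e (Sum.inr i))
    (fun i => a (Sum.inl i)) (fun i => a (Sum.inr i)) h
  rw [rD, nmD_add, nmD_add]
  exact this

lemma rD_of_le (hr : IsNormalOrdering ξ dd r) {d e : (Fin n ⊕ Fin n) →₀ ℕ}
    (h : d ≤ e) : rD ξ dd r d e := by
  have h1 : rD ξ dd r (0 + d) ((e - d) + d) := rD_add_right ξ dd r hr d (rD_zero ξ dd r hr _)
  rwa [zero_add, tsub_add_cancel_of_le h] at h1

lemma sLT_wf (hΦ : ∀ lam mu, Φ (nm ξ dd lam mu) = MvPolynomial.monomial (expof lam mu) 1)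
    (hr : IsNormalOrdering ξ dd r) :
    WellFounded (fun d e : (Fin n ⊕ Fin n) →₀ ℕ => rD ξ dd r d e ∧ d ≠ e) := by
  haveI h1 : IsIrrefl ((Fin n ⊕ Fin n) →₀ ℕ) (fun d e => rD ξ dd r d e ∧ d ≠ e) :=
    ⟨fun a ha => ha.2 rfl⟩
  haveI h2 : IsTrans ((Fin n ⊕ Fin n) →₀ ℕ) (fun d e => rD ξ dd r d e ∧ d ≠ e) := by
    constructor
    rintro a b c ⟨hab, hab'⟩ ⟨hbc, hbc'⟩
    refine ⟨rD_trans ξ dd r hab hbc, ?_⟩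
    rintro rfl
    exact hab' (rD_antisymm ξ dd Φ r hΦ hab hbc)
  haveI h3 : IsStrictOrder ((Fin n ⊕ Fin n) →₀ ℕ) (fun d e => rD ξ dd r d e ∧ d ≠ e) :=
    { }
  rw [RelEmbedding.wellFounded_iff_isEmpty]
  constructor
  intro f
  obtain ⟨m, k, hmk, hle⟩ := wellQuasiOrdered_le (α := (Fin n ⊕ Fin n) →₀ ℕ)
    (fun i => f i)
  have h1 : rD ξ dd r (f m) (f k) := rD_of_le ξ dd r hr hle
  have h2 : rD ξ dd r (f k) (f m) ∧ f k ≠ f m := f.map_rel_iff.mpr hmk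
  exact h2.2 (rD_antisymm ξ dd Φ r hΦ h2.1 h1)

lemma exists_rMax (s : Finset ((Fin n ⊕ Fin n) →₀ ℕ)) (hs : s.Nonempty) :
    ∃ d ∈ s, ∀ c ∈ s, rD ξ dd r c d := by
  induction s using Finset.induction_on with
  | empty => exact absurd hs (by simp)
  | @insert a s' ha ih =>
    by_cases hs' : s'.Nonempty
    · obtain ⟨d, hd, hmax⟩ := ih hs'
      rcases rD_total ξ dd r a d with h | h
      · refine ⟨d, Finset.mem_insert_of_mem hd, ?_⟩
        intro c hc
        rcases Finset.mem_insert.mp hc with rfl | hc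
        · exact h
        · exact hmax c hc
      · refine ⟨a, Finset.mem_insert_self _ _, ?_⟩
        intro c hc
        rcases Finset.mem_insert.mp hc with rfl | hc
        · exact rD_refl ξ dd r c
        · exact rD_trans ξ dd r (hmax c hc) h
    · rw [Finset.not_nonempty_iff_eq_empty] at hs'
      subst hs'
      refine ⟨a, Finset.mem_insert_self _ _, ?_⟩
      intro c hc
      rcases Finset.mem_insert.mp hc with rfl | hc
      · exact rD_refl ξ dd r c
      · simp at hc

end OrderTheory


end Weyl2

end GBAux


namespace GBAux

open MvPolynomial Finsupp

section Weyl2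

variable {K : Type*} [Field K] {n : ℕ} {W : Type*} [Ring W] [Algebra K W]
variable (ξ dd : Fin n → W)
variable (Φ : W ≃ₗ[K] MvPolynomial (Fin n ⊕ Fin n) K)

/-! ### Leading exponents and reduction -/

noncomputable def lexp (r : TO ↥(NormalMonomials ξ dd)) (p : MvPolynomial (Fin n ⊕ Fin n) K) :
    (Fin n ⊕ Fin n) →₀ ℕ :=
  letI := Classical.propDecidable (∃ d, d ∈ p.support ∧ ∀ c ∈ p.support, rD ξ dd r c d)
  if h : ∃ d, d ∈ p.support ∧ ∀ c ∈ p.support, rD ξ dd r c d then h.choose else 0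

lemma lexp_spec (r : TO ↥(NormalMonomials ξ dd)) (p : MvPolynomial (Fin n ⊕ Fin n) K)
    (hp : p ≠ 0) : lexp ξ dd r p ∈ p.support ∧ ∀ c ∈ p.support, rD ξ dd r c (lexp ξ dd r p) := by
  have hne : p.support.Nonempty := MvPolynomial.support_nonempty.mpr hp
  have hex : ∃ d, d ∈ p.support ∧ ∀ c ∈ p.support, rD ξ dd r c d := by
    obtain ⟨d, hd, hmax⟩ := exists_rMax ξ dd r p.support hne
    exact ⟨d, hd, hmax⟩
  rw [lexp, dif_pos hex]
  exact hex.choose_spec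

/-- The set of leading exponents of nonzero elements of `L`. -/
def ESet (r : TO ↥(NormalMonomials ξ dd)) (L : Submodule W W) : Set ((Fin n ⊕ Fin n) →₀ ℕ) :=
  {d | ∃ x ∈ L, x ≠ 0 ∧ IsLTerm ξ dd Φ r x d}

lemma smul_mem_L (L : Submodule W W) (c : K) {x : W} (hx : x ∈ L) : c • x ∈ L := by
  rw [Algebra.smul_def]
  have := L.smul_mem (algebraMap K W c) hx
  rwa [smul_eq_mul] at this

lemma reduce (hΦ : ∀ lam mu, Φ (nm ξ dd lam mu) = MvPolynomial.monomial (expof lam mu) 1)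
    (r : TO ↥(NormalMonomials ξ dd)) (hr : IsNormalOrdering ξ dd r)
    (L : Submodule W W) (p : MvPolynomial (Fin n ⊕ Fin n) K) :
    ∃ q : MvPolynomial (Fin n ⊕ Fin n) K,
      (∀ c ∈ q.support, c ∉ ESet ξ dd Φ r L) ∧ Φ.symm (p - q) ∈ L := by
  have main : ∀ d : (Fin n ⊕ Fin n) →₀ ℕ, ∀ p : MvPolynomial (Fin n ⊕ Fin n) K,
      (∀ c ∈ p.support, rD ξ dd r c d) →
      ∃ q, (∀ c ∈ q.support, c ∉ ESet ξ dd Φ r L) ∧ Φ.symm (p - q) ∈ L := by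
    intro d
    refine (sLT_wf ξ dd Φ r hΦ hr).induction
      (C := fun d => ∀ p : MvPolynomial (Fin n ⊕ Fin n) K,
        (∀ c ∈ p.support, rD ξ dd r c d) →
        ∃ q, (∀ c ∈ q.support, c ∉ ESet ξ dd Φ r L) ∧ Φ.symm (p - q) ∈ L) d ?_
    clear d
    intro d ih p hbound
    by_cases hp0 : p = 0
    · exact ⟨0, by simp, by rw [hp0, sub_zero, map_zero]; exact L.zero_mem⟩
    obtain ⟨hmem, hmax⟩ := lexp_spec ξ dd r p hp0
    set m := lexp ξ dd r p with hm
    by_cases hmd : m = d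
    · -- leading exponent is exactly d
      by_cases hE : d ∈ ESet ξ dd Φ r L
      · obtain ⟨x, hxL, hx0, hlt⟩ := hE
        set y := Φ x with hy
        have hyd : MvPolynomial.coeff d y ≠ 0 := MvPolynomial.mem_support_iff.mp hlt.1
        set c0 := MvPolynomial.coeff d p / MvPolynomial.coeff d y with hc0
        set p' := p - c0 • y with hp'
        have hbound' : ∀ c ∈ p'.support, rD ξ dd r c d ∧ c ≠ d := by
          intro c hc
          have hcne : MvPolynomial.coeff c p' ≠ 0 := MvPolynomial.mem_support_iff.mp hc
          constructor
          · by_cases hcp : MvPolynomial.coeff c p = 0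
            · have hcy : MvPolynomial.coeff c y ≠ 0 := by
                intro hcy
                apply hcne
                rw [hp', MvPolynomial.coeff_sub, MvPolynomial.coeff_smul, hcp, hcy]
                simp
              exact hlt.2 c (MvPolynomial.mem_support_iff.mpr hcy)
            · have := hmax c (MvPolynomial.mem_support_iff.mpr hcp)
              rwa [hmd] at this
          · intro hcd
            apply hcne
            rw [hcd, hp', MvPolynomial.coeff_sub, MvPolynomial.coeff_smul, hc0,
              smul_eq_mul, div_mul_cancel₀ _ hyd, sub_self]
        by_cases hp'0 : p' = 0
        · refine ⟨0, by simp, ?_⟩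
          have hpc : p = c0 • y := by
            rw [← sub_eq_zero]; exact hp'0
          rw [sub_zero, hpc, map_smul, hy, LinearEquiv.symm_apply_apply]
          exact smul_mem_L L c0 hxL
        · obtain ⟨hmem', hmax'⟩ := lexp_spec ξ dd r p' hp'0
          have hm' := hbound' _ hmem'
          obtain ⟨q, hq, hqL⟩ := ih (lexp ξ dd r p') hm' p' hmax'
          refine ⟨q, hq, ?_⟩
          have hpq : p - q = (p' - q) + c0 • y := by rw [hp']; ring
          rw [hpq, map_add, map_smul, hy, LinearEquiv.symm_apply_apply]
          exact L.add_mem hqL (smul_mem_L L c0 hxL)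
      · -- leading exponent not in E: move it to q
        set p' := p - monomial d (MvPolynomial.coeff d p) with hp'
        have hbound' : ∀ c ∈ p'.support, rD ξ dd r c d ∧ c ≠ d := by
          intro c hc
          have hcne : MvPolynomial.coeff c p' ≠ 0 := MvPolynomial.mem_support_iff.mp hc
          have hcd : c ≠ d := by
            intro hcd
            apply hcne
            rw [hcd, hp', MvPolynomial.coeff_sub, MvPolynomial.coeff_monomial, if_pos rfl,
              sub_self]
          refine ⟨?_, hcd⟩
          have hcp : MvPolynomial.coeff c p ≠ 0 := by
            intro hcp
            apply hcne
            rw [hp', MvPolynomial.coeff_sub, MvPolynomial.coeff_monomial,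
              if_neg (fun h => hcd h.symm), hcp, sub_zero]
          have := hmax c (MvPolynomial.mem_support_iff.mpr hcp)
          rwa [hmd] at this
        by_cases hp'0 : p' = 0
        · refine ⟨monomial d (MvPolynomial.coeff d p), ?_, ?_⟩
          · intro c hc
            have := MvPolynomial.support_monomial_subset hc
            rw [Finset.mem_singleton] at this
            rwa [this]
          · have : p - monomial d (MvPolynomial.coeff d p) = p' := rfl
            rw [this, hp'0, map_zero]
            exact L.zero_mem
        · obtain ⟨hmem', hmax'⟩ := lexp_spec ξ dd r p' hp'0
          have hm' := hbound' _ hmem'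
          obtain ⟨q, hq, hqL⟩ := ih (lexp ξ dd r p') hm' p' hmax'
          refine ⟨q + monomial d (MvPolynomial.coeff d p), ?_, ?_⟩
          · intro c hc
            have := Finsupp.support_add hc
            rw [Finset.mem_union] at this
            rcases this with h | h
            · exact hq c h
            · have := MvPolynomial.support_monomial_subset h
              rw [Finset.mem_singleton] at this
              rwa [this]
          · have hpq : p - (q + monomial d (MvPolynomial.coeff d p)) = p' - q := by
              rw [hp']; ring
            rwa [hpq]
    · -- leading exponent of p is strictly below d
      exact ih m ⟨hbound _ hmem, hmd⟩ p hmax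
  by_cases hp : p = 0
  · exact main 0 p (by simp [hp])
  · exact main (lexp ξ dd r p) p (lexp_spec ξ dd r p hp).2

/-! ### Leading term of a product with a normal monomial -/

def wmon (a : (Fin n ⊕ Fin n) →₀ ℕ) : W :=
  nm ξ dd (fun i => a (Sum.inl i)) (fun i => a (Sum.inr i))

lemma wmon_eq_nmD (a : (Fin n ⊕ Fin n) →₀ ℕ) :
    wmon ξ dd a = ((nmD ξ dd a : ↥(NormalMonomials ξ dd)) : W) := rfl

lemma psi_mono
    (hξcomm : ∀ i j, ξ i * ξ j = ξ j * ξ i)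
    (hddcomm : ∀ i j, dd i * dd j = dd j * dd i)
    (hrel : ∀ i j, dd i * ξ j - ξ j * dd i = if i = j then (1 : W) else 0)
    (hΦ : ∀ lam mu, Φ (nm ξ dd lam mu) = MvPolynomial.monomial (expof lam mu) 1)
    (a e : (Fin n ⊕ Fin n) →₀ ℕ) (b : K) :
    ∃ q : MvPolynomial (Fin n ⊕ Fin n) K,
      (∀ c ∈ q.support, ∃ kap : Fin n → ℕ, kap ≠ 0 ∧ c + expof kap kap = a + e) ∧
      Φ (wmon ξ dd a * Φ.symm (monomial e b)) = monomial (a + e) b + b • q := by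
  obtain ⟨q, hq, heq⟩ := nm_mul_nm ξ dd Φ hξcomm hddcomm hrel hΦ
    (fun i => a (Sum.inl i)) (fun i => a (Sum.inr i))
    (fun i => e (Sum.inl i)) (fun i => e (Sum.inr i))
  have hexp : expof ((fun i => a (Sum.inl i)) + fun i => e (Sum.inl i))
      ((fun i => a (Sum.inr i)) + fun i => e (Sum.inr i)) = a + e := by
    rw [expof_add, expof_eIn_eOut, expof_eIn_eOut]
  refine ⟨q, ?_, ?_⟩
  · intro c hc
    obtain ⟨kap, hkap, hck⟩ := hq c hc
    exact ⟨kap, hkap, by rw [hck, hexp]⟩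
  · have hsym : Φ.symm (monomial e b) = b • wmon ξ dd e := by
      have : monomial e b
          = monomial (expof (fun i => e (Sum.inl i)) (fun i => e (Sum.inr i))) b := by
        rw [expof_eIn_eOut]
      rw [this, symm_monomial ξ dd Φ hΦ]
      rfl
    rw [hsym, mul_smul_comm, map_smul]
    rw [wmon, wmon, heq, map_add, hΦ, hexp, LinearEquiv.apply_symm_apply]
    rw [smul_add, MvPolynomial.smul_monomial, smul_eq_mul, mul_one]

lemma lead_bound
    (hξcomm : ∀ i j, ξ i * ξ j = ξ j * ξ i)
    (hddcomm : ∀ i j, dd i * dd j = dd j * dd i)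
    (hrel : ∀ i j, dd i * ξ j - ξ j * dd i = if i = j then (1 : W) else 0)
    (hΦ : ∀ lam mu, Φ (nm ξ dd lam mu) = MvPolynomial.monomial (expof lam mu) 1)
    (r : TO ↥(NormalMonomials ξ dd)) (hr : IsNormalOrdering ξ dd r)
    (a d : (Fin n ⊕ Fin n) →₀ ℕ) (p : MvPolynomial (Fin n ⊕ Fin n) K) :
    (∀ e ∈ p.support, rD ξ dd r e d) →
    ∀ c ∈ (Φ (wmon ξ dd a * Φ.symm p)).support, rD ξ dd r c (a + d) := by
  induction p using AddMonoidAlgebra.induction with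
  | zero =>
    intro _ c hc
    rw [map_zero, mul_zero, map_zero] at hc
    simp at hc
  | single_add a' b f ha' hb ihf =>
    intro hp c hc
    have hsupp : MvPolynomial.support (AddMonoidAlgebra.single a' b + f) = {a'} ∪ MvPolynomial.support f := by
      show (AddMonoidAlgebra.single _ b + f).coeff.support = _
      rw [AddMonoidAlgebra.coeff_add, AddMonoidAlgebra.coeff_single, Finsupp.support_add_eq, Finsupp.support_single_ne_zero _ hb]
      · rfl
      rw [Finsupp.support_single_ne_zero _ hb]
      simpa using ha'
    have hmem : a' ∈ MvPolynomial.support (AddMonoidAlgebra.single a' b + f) := by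
      rw [hsupp]; exact Finset.mem_union_left _ (Finset.mem_singleton_self a')
    have hpf : ∀ e ∈ MvPolynomial.support f, rD ξ dd r e d := by
      intro e he
      have he' : e ∈ MvPolynomial.support (AddMonoidAlgebra.single a' b + f) := by
        rw [hsupp]; exact Finset.mem_union_right _ he
      exact hp e he'
    have key : (AddMonoidAlgebra.single a' b : MvPolynomial (Fin n ⊕ Fin n) K) = monomial a' b :=
      MvPolynomial.single_eq_monomial a' b
    rw [key, map_add, mul_add, map_add] at hc
    have := Finsupp.support_add hc
    rw [Finset.mem_union] at this
    rcases this with h | h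
    · obtain ⟨q, hq, heq⟩ := psi_mono ξ dd Φ hξcomm hddcomm hrel hΦ a a' b
      rw [heq] at h
      have := Finsupp.support_add h
      rw [Finset.mem_union] at this
      have haa' : rD ξ dd r (a + a') (a + d) := by
        have h1 := rD_add_right ξ dd r hr a (hp a' hmem)
        rwa [add_comm a' a, add_comm d a] at h1
      rcases this with h2 | h2
      · have := MvPolynomial.support_monomial_subset h2
        rw [Finset.mem_singleton] at this
        rw [this]
        exact haa'
      · obtain ⟨kap, hkap, hck⟩ := hq c (MvPolynomial.support_smul h2)
        have hle : c ≤ a + a' := le_iff_exists_add.mpr ⟨expof kap kap, hck.symm⟩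
        exact rD_trans ξ dd r (rD_of_le ξ dd r hr hle) haa'
    · exact ihf hpf c h

lemma lead_coeff
    (hξcomm : ∀ i j, ξ i * ξ j = ξ j * ξ i)
    (hddcomm : ∀ i j, dd i * dd j = dd j * dd i)
    (hrel : ∀ i j, dd i * ξ j - ξ j * dd i = if i = j then (1 : W) else 0)
    (hΦ : ∀ lam mu, Φ (nm ξ dd lam mu) = MvPolynomial.monomial (expof lam mu) 1)
    (r : TO ↥(NormalMonomials ξ dd)) (hr : IsNormalOrdering ξ dd r)
    (a d : (Fin n ⊕ Fin n) →₀ ℕ) (p : MvPolynomial (Fin n ⊕ Fin n) K) :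
    (∀ e ∈ p.support, rD ξ dd r e d) →
    MvPolynomial.coeff (a + d) (Φ (wmon ξ dd a * Φ.symm p)) = MvPolynomial.coeff d p := by
  induction p using AddMonoidAlgebra.induction with
  | zero =>
    intro _
    rw [map_zero, mul_zero, map_zero]
    simp
  | single_add a' b f ha' hb ihf =>
    intro hp
    have hsupp : MvPolynomial.support (AddMonoidAlgebra.single a' b + f) = {a'} ∪ MvPolynomial.support f := by
      show (AddMonoidAlgebra.single _ b + f).coeff.support = _
      rw [AddMonoidAlgebra.coeff_add, AddMonoidAlgebra.coeff_single, Finsupp.support_add_eq, Finsupp.support_single_ne_zero _ hb]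
      · rfl
      rw [Finsupp.support_single_ne_zero _ hb]
      simpa using ha'
    have hmem : a' ∈ MvPolynomial.support (AddMonoidAlgebra.single a' b + f) := by
      rw [hsupp]; exact Finset.mem_union_left _ (Finset.mem_singleton_self a')
    have hpf : ∀ e ∈ MvPolynomial.support f, rD ξ dd r e d := by
      intro e he
      have he' : e ∈ MvPolynomial.support (AddMonoidAlgebra.single a' b + f) := by
        rw [hsupp]; exact Finset.mem_union_right _ he
      exact hp e he'
    have key : (AddMonoidAlgebra.single a' b : MvPolynomial (Fin n ⊕ Fin n) K) = monomial a' b :=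
      MvPolynomial.single_eq_monomial a' b
    rw [key, map_add, mul_add, map_add, MvPolynomial.coeff_add, ihf hpf,
      MvPolynomial.coeff_add]
    congr 1
    obtain ⟨q, hq, heq⟩ := psi_mono ξ dd Φ hξcomm hddcomm hrel hΦ a a' b
    have hq0 : MvPolynomial.coeff (a + d) q = 0 := by
      by_contra hne
      obtain ⟨kap, hkap, hck⟩ := hq _ (MvPolynomial.mem_support_iff.mpr hne)
      have hck' : d + expof kap kap = a' := by
        have := hck
        rw [add_assoc] at this
        exact add_left_cancel this
      have hda' : d ≠ a' := by
        intro hda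
        rw [← hda, add_eq_left] at hck'
        exact expof_diag_ne_zero hkap hck'
      have h1 : rD ξ dd r d a' :=
        rD_of_le ξ dd r hr (le_iff_exists_add.mpr ⟨expof kap kap, hck'.symm⟩)
      exact hda' (rD_antisymm ξ dd Φ r hΦ h1 (hp a' hmem))
    rw [heq, MvPolynomial.coeff_add, MvPolynomial.coeff_smul, hq0, smul_zero, add_zero]
    rw [MvPolynomial.coeff_monomial, MvPolynomial.coeff_monomial]
    by_cases hda : a' = d
    · rw [if_pos hda, if_pos (by rw [hda])]
    · rw [if_neg hda, if_neg (fun h => hda (add_left_cancel h))]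

lemma isLTerm_ne_zero (r : TO ↥(NormalMonomials ξ dd)) {w : W}
    {d : (Fin n ⊕ Fin n) →₀ ℕ} (h : IsLTerm ξ dd Φ r w d) : w ≠ 0 := by
  intro hw
  have := h.1
  rw [hw, map_zero] at this
  simp at this

lemma isLTerm_nm_mul
    (hξcomm : ∀ i j, ξ i * ξ j = ξ j * ξ i)
    (hddcomm : ∀ i j, dd i * dd j = dd j * dd i)
    (hrel : ∀ i j, dd i * ξ j - ξ j * dd i = if i = j then (1 : W) else 0)
    (hΦ : ∀ lam mu, Φ (nm ξ dd lam mu) = MvPolynomial.monomial (expof lam mu) 1)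
    (r : TO ↥(NormalMonomials ξ dd)) (hr : IsNormalOrdering ξ dd r)
    (a d : (Fin n ⊕ Fin n) →₀ ℕ) (x : W) (h : IsLTerm ξ dd Φ r x d) :
    IsLTerm ξ dd Φ r (wmon ξ dd a * x) (a + d) := by
  have hxx : wmon ξ dd a * x = wmon ξ dd a * Φ.symm (Φ x) := by
    rw [LinearEquiv.symm_apply_apply]
  constructor
  · rw [MvPolynomial.mem_support_iff, hxx,
      lead_coeff ξ dd Φ hξcomm hddcomm hrel hΦ r hr a d (Φ x) h.2]
    exact MvPolynomial.mem_support_iff.mp h.1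
  · intro c hc
    rw [hxx] at hc
    exact lead_bound ξ dd Φ hξcomm hddcomm hrel hΦ r hr a d (Φ x) h.2 c hc

/-! ### Transfer of the Gröbner basis property -/

lemma isLTerm_unique
    (hΦ : ∀ lam mu, Φ (nm ξ dd lam mu) = MvPolynomial.monomial (expof lam mu) 1)
    (r : TO ↥(NormalMonomials ξ dd)) {x : W} {d d' : (Fin n ⊕ Fin n) →₀ ℕ}
    (h1 : IsLTerm ξ dd Φ r x d) (h2 : IsLTerm ξ dd Φ r x d') : d = d' :=
  rD_antisymm ξ dd Φ r hΦ (h2.2 d h1.1) (h1.2 d' h2.1)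

lemma genSet_eq
    (hΦ : ∀ lam mu, Φ (nm ξ dd lam mu) = MvPolynomial.monomial (expof lam mu) 1)
    (r0 s : TO ↥(NormalMonomials ξ dd)) (F : Finset W)
    (hs : ∀ b ∈ F, b ≠ 0 → IsLTerm ξ dd Φ s b (lexp ξ dd r0 (Φ b))) :
    {p : MvPolynomial (Fin n ⊕ Fin n) K | ∃ b ∈ F, b ≠ 0 ∧
        ∃ d, IsLTerm ξ dd Φ s b d ∧ p = monomial d 1}
      = (fun d => (monomial d (1 : K)))
          '' {d | ∃ b ∈ F, b ≠ 0 ∧ d = lexp ξ dd r0 (Φ b)} := by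
  ext p
  constructor
  · rintro ⟨b, hbF, hb0, d, hlt, rfl⟩
    have hd : d = lexp ξ dd r0 (Φ b) := isLTerm_unique ξ dd Φ hΦ s hlt (hs b hbF hb0)
    exact ⟨d, ⟨b, hbF, hb0, hd⟩, rfl⟩
  · rintro ⟨d, ⟨b, hbF, hb0, hd⟩, rfl⟩
    exact ⟨b, hbF, hb0, d, hd ▸ hs b hbF hb0, rfl⟩

lemma ltideal_eq (s : TO ↥(NormalMonomials ξ dd)) (L : Submodule W W) :
    LTIdeal ξ dd Φ s (L : Set W)
      = Ideal.span ((fun d => (monomial d (1 : K))) '' ESet ξ dd Φ s L) := by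
  unfold LTIdeal
  congr 1
  ext p
  constructor
  · rintro ⟨x, hxL, hx0, d, hlt, rfl⟩
    exact ⟨d, ⟨x, hxL, hx0, hlt⟩, rfl⟩
  · rintro ⟨d, ⟨x, hxL, hx0, hlt⟩, rfl⟩
    exact ⟨x, hxL, hx0, d, hlt, rfl⟩

lemma transfer
    (hξcomm : ∀ i j, ξ i * ξ j = ξ j * ξ i)
    (hddcomm : ∀ i j, dd i * dd j = dd j * dd i)
    (hrel : ∀ i j, dd i * ξ j - ξ j * dd i = if i = j then (1 : W) else 0)
    (hΦ : ∀ lam mu, Φ (nm ξ dd lam mu) = MvPolynomial.monomial (expof lam mu) 1)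
    (L : Submodule W W) (F : Finset W) (hF : (F : Set W) ⊆ (L : Set W))
    (r0 r : TO ↥(NormalMonomials ξ dd))
    (hr0 : IsNormalOrdering ξ dd r0) (hr : IsNormalOrdering ξ dd r)
    (h0 : IsGroebnerBasis ξ dd Φ r0 L F)
    (hV : ∀ b ∈ F, b ≠ 0 → IsLTerm ξ dd Φ r b (lexp ξ dd r0 (Φ b))) :
    IsGroebnerBasis ξ dd Φ r L F := by
  have hΦne : ∀ b : W, b ≠ 0 → Φ b ≠ 0 := by
    intro b hb0 hb
    exact hb0 (by rw [← Φ.map_zero] at hb; exact Φ.injective hb)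
  have hs0 : ∀ b ∈ F, b ≠ 0 → IsLTerm ξ dd Φ r0 b (lexp ξ dd r0 (Φ b)) := by
    intro b hbF hb0
    obtain ⟨h1, h2⟩ := lexp_spec ξ dd r0 (Φ b) (hΦne b hb0)
    exact ⟨h1, h2⟩
  set D : Set ((Fin n ⊕ Fin n) →₀ ℕ) :=
    {d | ∃ b ∈ F, b ≠ 0 ∧ d = lexp ξ dd r0 (Φ b)} with hD
  have hGB0 : LTIdeal ξ dd Φ r0 (L : Set W)
      = Ideal.span ((fun d => (monomial d (1 : K))) '' D) := by
    rw [h0.2.2, genSet_eq ξ dd Φ hΦ r0 r0 F hs0]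
  refine ⟨h0.1, h0.2.1, ?_⟩
  rw [genSet_eq ξ dd Φ hΦ r0 r F hV, ltideal_eq, ← hD]
  apply le_antisymm
  · -- LT ideal of L ⊆ span of leading monomials of F
    rw [Ideal.span_le]
    rintro p ⟨e, heE, rfl⟩
    rw [SetLike.mem_coe, MvPolynomial.mem_ideal_span_monomial_image]
    intro xi hxi
    have hxie : xi = e := by
      have := MvPolynomial.support_monomial_subset hxi
      rwa [Finset.mem_singleton] at this
    subst hxie
    by_contra hcon
    push_neg at hcon
    -- reduce the monomial x^e modulo L with respect to r
    obtain ⟨q, hqE, hL⟩ := reduce ξ dd Φ hΦ r hr L (monomial xi 1)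
    set pp : MvPolynomial (Fin n ⊕ Fin n) K := monomial xi 1 - q with hpp
    have hppe : MvPolynomial.coeff xi pp = 1 := by
      have hq0 : MvPolynomial.coeff xi q = 0 := by
        rw [← MvPolynomial.notMem_support_iff]
        intro hmem
        exact hqE xi hmem heE
      rw [hpp, MvPolynomial.coeff_sub, MvPolynomial.coeff_monomial, if_pos rfl, hq0, sub_zero]
    have hpp0 : pp ≠ 0 := fun h => by rw [h] at hppe; simp at hppe
    set x : W := Φ.symm pp with hx
    have hΦx : Φ x = pp := Φ.apply_symm_apply pp
    have hx0 : x ≠ 0 := by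
      intro h
      rw [h, map_zero] at hΦx
      exact hpp0 hΦx.symm
    obtain ⟨hf1, hf2⟩ := lexp_spec ξ dd r0 pp hpp0
    set f := lexp ξ dd r0 pp with hf
    have hfE0 : f ∈ ESet ξ dd Φ r0 L := by
      refine ⟨x, hL, hx0, ?_, ?_⟩
      · rw [hΦx]; exact hf1
      · rw [hΦx]; exact hf2
    have hfD : ∃ si ∈ D, si ≤ f := by
      have hmem : (monomial f 1 : MvPolynomial (Fin n ⊕ Fin n) K)
          ∈ LTIdeal ξ dd Φ r0 (L : Set W) := by
        rw [ltideal_eq]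
        exact Ideal.subset_span ⟨f, hfE0, rfl⟩
      rw [hGB0, MvPolynomial.mem_ideal_span_monomial_image] at hmem
      refine hmem f ?_
      rw [MvPolynomial.mem_support_iff, MvPolynomial.coeff_monomial, if_pos rfl]
      exact one_ne_zero
    obtain ⟨si, hsiD, hsif⟩ := hfD
    have hfsupp : f ∈ (monomial xi (1 : K)).support ∪ q.support := by
      apply Finsupp.support_sub
      exact hf1
    rw [Finset.mem_union] at hfsupp
    rcases hfsupp with h | h
    · have : f = xi := by
        have := MvPolynomial.support_monomial_subset h
        rwa [Finset.mem_singleton] at this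
      exact hcon si hsiD (this ▸ hsif)
    · -- f is in the support of q, but f is a leading exponent for r (contradiction)
      apply hqE f h
      obtain ⟨b, hbF, hb0, hsib⟩ := hsiD
      subst hsib
      have hy := isLTerm_nm_mul ξ dd Φ hξcomm hddcomm hrel hΦ r hr
        (f - GBAux.lexp ξ dd r0 (Φ b)) _ b (hV b hbF hb0)
      rw [tsub_add_cancel_of_le hsif] at hy
      refine ⟨wmon ξ dd (f - GBAux.lexp ξ dd r0 (Φ b)) * b, ?_,
        isLTerm_ne_zero ξ dd Φ r hy, hy⟩
      have := L.smul_mem (wmon ξ dd (f - GBAux.lexp ξ dd r0 (Φ b))) (hF hbF)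
      rwa [smul_eq_mul] at this
  · -- span of leading monomials of F ⊆ LT ideal of L
    rw [Ideal.span_le]
    rintro p ⟨d, ⟨b, hbF, hb0, hd⟩, rfl⟩
    rw [SetLike.mem_coe]
    apply Ideal.subset_span
    exact ⟨d, ⟨b, hF hbF, hb0, hd ▸ hV b hbF hb0⟩, rfl⟩

end Weyl2

end GBAux

/-- for a left ideal `L` of `W` and a finite subset `F ⊆ L`, the set
`𝔙_L(F)` of all normal orderings `≼` for which `F` is a Gröbner basis of `L` is open in the
subspace `NO(N)` of `TO(N)`. -/
theorem groebnerBasis_orderings_isOpen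
    {K : Type*} [Field K] [CharZero K] {n : ℕ} (hn : 1 ≤ n)
    {W : Type*} [Ring W] [Algebra K W] (ξ dd : Fin n → W)
    (hξcomm : ∀ i j, ξ i * ξ j = ξ j * ξ i)
    (hddcomm : ∀ i j, dd i * dd j = dd j * dd i)
    (hrel : ∀ i j, dd i * ξ j - ξ j * dd i = if i = j then (1 : W) else 0)
    (Φ : W ≃ₗ[K] MvPolynomial (Fin n ⊕ Fin n) K)
    (hΦ : ∀ lam mu, Φ (nm ξ dd lam mu) = MvPolynomial.monomial (expof lam mu) 1)
    (L : Submodule W W) (F : Finset W) (hF : (F : Set W) ⊆ (L : Set W)) :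
    IsOpen {ρ : ↥(NOSet ξ dd) | IsGroebnerBasis ξ dd Φ ρ.1 L F} := by
  classical
  set V : ↥(NOSet ξ dd) → Set (TO ↥(NormalMonomials ξ dd)) := fun ρ0 =>
    ⋂ b ∈ F, ⋂ c ∈ (Φ b).support,
      USet (nmD ξ dd c) (nmD ξ dd (GBAux.lexp ξ dd ρ0.1 (Φ b))) with hV
  have hVopen : ∀ ρ0, IsOpen (V ρ0) := by
    intro ρ0
    apply isOpen_biInter_finset
    intro b _
    apply isOpen_biInter_finset
    intro c _
    exact TopologicalSpace.isOpen_generateFrom_of_mem ⟨_, _, rfl⟩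
  have hmemV : ∀ ρ0 : ↥(NOSet ξ dd), ρ0.1 ∈ V ρ0 := by
    intro ρ0
    rw [hV]
    simp only [Set.mem_iInter]
    intro b _ c hc
    have hb : Φ b ≠ 0 := by
      intro h
      rw [h] at hc
      simp at hc
    exact (GBAux.lexp_spec ξ dd ρ0.1 (Φ b) hb).2 c hc
  have hVsub : ∀ ρ0 ρ : ↥(NOSet ξ dd), ρ.1 ∈ V ρ0 →
      ∀ b ∈ F, b ≠ 0 → IsLTerm ξ dd Φ ρ.1 b (GBAux.lexp ξ dd ρ0.1 (Φ b)) := by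
    intro ρ0 ρ hmem b hbF hb0
    have hb : Φ b ≠ 0 := by
      intro h
      apply hb0
      have := congrArg Φ.symm h
      rwa [Φ.symm_apply_apply, map_zero] at this
    rw [hV] at hmem
    simp only [Set.mem_iInter] at hmem
    refine ⟨(GBAux.lexp_spec ξ dd ρ0.1 (Φ b) hb).1, ?_⟩
    intro c hc
    exact hmem b hbF c hc
  have hkey : ∀ ρ0 : ↥(NOSet ξ dd), IsGroebnerBasis ξ dd Φ ρ0.1 L F →
      ∀ ρ : ↥(NOSet ξ dd), ρ.1 ∈ V ρ0 → IsGroebnerBasis ξ dd Φ ρ.1 L F := by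
    intro ρ0 h0 ρ hmem
    exact GBAux.transfer ξ dd Φ hξcomm hddcomm hrel hΦ L F hF ρ0.1 ρ.1 ρ0.2 ρ.2 h0
      (hVsub ρ0 ρ hmem)
  have hset : {ρ : ↥(NOSet ξ dd) | IsGroebnerBasis ξ dd Φ ρ.1 L F}
      = Subtype.val ⁻¹' (⋃ ρ0 : ↥(NOSet ξ dd),
          ⋃ _ : IsGroebnerBasis ξ dd Φ ρ0.1 L F, V ρ0) := by
    ext ρ
    simp only [Set.mem_setOf_eq, Set.mem_preimage, Set.mem_iUnion]
    constructor
    · intro h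
      exact ⟨ρ, h, hmemV ρ⟩
    · rintro ⟨ρ0, h0, hm⟩
      exact hkey ρ0 h0 ρ hm
  rw [hset]
  apply IsOpen.preimage continuous_subtype_val
  exact isOpen_iUnion fun ρ0 => isOpen_iUnion fun _ => hVopen ρ0
end

section
/- Every left ideal L of the n-th Weyl algebra W admits a universal Gröbner basis, i.e. a finite subset V ⊆ L that is a Gröbner basis of L with respect to every normal ordering ≼ of W. -/
open MvPolynomial

namespace TOaux
open Topology Filter
variable {S : Type*}

lemma rel_refl (r : TO S) (a : S) : r.rel a a := (r.2.2.2 a a).elim id id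

lemma rel_total (r : TO S) (a b : S) : r.rel a b ∨ r.rel b a := r.2.2.2 a b

lemma rel_antisymm (r : TO S) {a b : S} (h1 : r.rel a b) (h2 : r.rel b a) : a = b :=
  r.2.1 a b h1 h2

lemma rel_trans (r : TO S) {a b c : S} (h1 : r.rel a b) (h2 : r.rel b c) : r.rel a c :=
  r.2.2.1 a b c h1 h2

lemma isOpen_USet (a b : S) : IsOpen (USet a b) :=
  TopologicalSpace.isOpen_generateFrom_of_mem ⟨a, b, rfl⟩

open Classical in
lemma not_USet_eq (a b : S) : {r : TO S | ¬ r.rel a b} = if a = b then ∅ else USet b a := by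
  split_ifs with h
  · subst h
    ext r; simp [rel_refl r a]
  · ext r
    simp only [Set.mem_setOf_eq, USet]
    constructor
    · intro hn
      exact (rel_total r a b).resolve_left hn
    · intro hba hab
      exact h (rel_antisymm r hab hba)

open Classical in
lemma isOpen_not_USet (a b : S) : IsOpen {r : TO S | ¬ r.rel a b} := by
  rw [not_USet_eq]
  split_ifs
  · exact isOpen_empty
  · exact isOpen_USet _ _

lemma isClosed_USet (a b : S) : IsClosed (USet a b) := by
  rw [← isOpen_compl_iff]
  convert isOpen_not_USet a b using 1
  rfl

lemma isClosed_imp (a b c d : S) : IsClosed {r : TO S | r.rel a b → r.rel c d} := by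
  rw [← isOpen_compl_iff]
  have : {r : TO S | r.rel a b → r.rel c d}ᶜ = USet a b ∩ {r : TO S | ¬ r.rel c d} := by
    ext r
    simp only [Set.mem_compl_iff, Set.mem_setOf_eq, Set.mem_inter_iff, USet, _root_.not_imp]
  rw [this]
  exact (isOpen_USet a b).inter (isOpen_not_USet c d)

instance compactSpace (S : Type*) : CompactSpace (TO S) := by
  rw [← isCompact_univ_iff]
  rw [isCompact_iff_ultrafilter_le_nhds]
  intro F _
  classical
  have htot : IsTotalOrdering (fun a b : S => {s : TO S | s.rel a b} ∈ F) := by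
    refine ⟨?_, ?_, ?_⟩
    · intro a b h1 h2
      obtain ⟨s, hs⟩ := F.nonempty_of_mem (F.inter_mem h1 h2)
      exact rel_antisymm s hs.1 hs.2
    · intro a b c h1 h2
      have := F.inter_mem h1 h2
      refine F.mem_of_superset this ?_
      rintro s ⟨hs1, hs2⟩
      exact rel_trans s hs1 hs2
    · intro a b
      by_contra hc
      push_neg at hc
      have h1 : {s : TO S | s.rel a b}ᶜ ∈ F := (Ultrafilter.compl_mem_iff_notMem).2 hc.1
      have h2 : {s : TO S | s.rel b a}ᶜ ∈ F := (Ultrafilter.compl_mem_iff_notMem).2 hc.2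
      obtain ⟨s, hs⟩ := F.nonempty_of_mem (F.inter_mem h1 h2)
      exact (rel_total s a b).elim hs.1 hs.2
  refine ⟨(⟨fun a b => {s : TO S | s.rel a b} ∈ F, htot⟩ : TO S), Set.mem_univ _, ?_⟩
  rw [show (TOTop S) = TopologicalSpace.generateFrom {U | ∃ a b, U = USet a b} from rfl]
  erw [TopologicalSpace.nhds_generateFrom]
  refine le_iInf₂ ?_
  rintro U ⟨hmem, a, b, rfl⟩
  rw [Filter.le_principal_iff]
  exact hmem

end TOaux

namespace UGBaux

/-- products of pairwise commuting families merge -/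
lemma ofFn_prod_mul {M : Type*} [Monoid M] : ∀ {m : ℕ} (f g : Fin m → M),
    (∀ i j, Commute (f i) (g j)) →
    (List.ofFn f).prod * (List.ofFn g).prod = (List.ofFn fun i => f i * g i).prod := by
  intro m
  induction m with
  | zero => intro f g _; simp
  | succ m IH =>
    intro f g h
    simp only [List.ofFn_succ, List.prod_cons]
    have hcomm : (List.ofFn fun i => f i.succ).prod * g 0
        = g 0 * (List.ofFn fun i => f i.succ).prod := by
      refine ((Commute.list_prod_right _ (g 0) ?_).symm).eq
      intro x hx
      obtain ⟨i, hi⟩ := List.mem_ofFn.1 hx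
      exact hi ▸ (h i.succ 0).symm
    have key : (List.ofFn fun i => f i.succ).prod * (g 0 * (List.ofFn fun i => g i.succ).prod)
        = g 0 * (List.ofFn fun i => f i.succ * g i.succ).prod := by
      rw [← mul_assoc, hcomm, mul_assoc, IH _ _ (fun i j => h i.succ j.succ)]
    rw [mul_assoc, key, ← mul_assoc]

lemma ofFn_prod_eq_single {M : Type*} [Monoid M] : ∀ {m : ℕ} (f : Fin m → M) (i : Fin m),
    (∀ j, j ≠ i → f j = 1) → (List.ofFn f).prod = f i := by
  intro m
  induction m with
  | zero => intro _ i; exact absurd i.2 (by simp)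
  | succ m IH =>
    intro f i h
    simp only [List.ofFn_succ, List.prod_cons]
    rcases Fin.eq_zero_or_eq_succ i with hi | ⟨j, rfl⟩
    · subst hi
      have : (List.ofFn (fun i => f i.succ)).prod = 1 := by
        refine List.prod_eq_one ?_
        intro x hx
        obtain ⟨k, hk⟩ := List.mem_ofFn.1 hx
        rw [← hk]
        exact h k.succ (Fin.succ_ne_zero k)
      rw [this, mul_one]
    · rw [h 0 (Ne.symm (Fin.succ_ne_zero j)), one_mul]
      exact IH (fun i => f i.succ) j (fun k hk => h k.succ (by simpa using hk))

end UGBaux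

namespace WeylCore

variable {K : Type*} [Field K] {n : ℕ} {W : Type*} [Ring W] [Algebra K W]
  (ξ dd : Fin n → W)

/-- the `ξ` part of a normal monomial -/
def Xp (lam : Fin n → ℕ) : W := (List.ofFn fun i => ξ i ^ lam i).prod

lemma nm_eq (lam mu : Fin n → ℕ) : nm ξ dd lam mu = Xp ξ lam * Xp dd mu := rfl

variable {ξ dd}

lemma Xp_add (h : ∀ i j, ξ i * ξ j = ξ j * ξ i) (a b : Fin n → ℕ) :
    Xp ξ (a + b) = Xp ξ a * Xp ξ b := by
  rw [Xp, Xp, Xp, UGBaux.ofFn_prod_mul _ _ (fun i j => (Commute.pow_pow (h i j) _ _))]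
  simp [pow_add]

lemma Xp_zero : Xp ξ 0 = 1 := by
  refine List.prod_eq_one ?_
  intro x hx
  obtain ⟨k, hk⟩ := List.mem_ofFn.1 hx
  simp only [Pi.zero_apply, pow_zero] at hk
  exact hk.symm

lemma Xp_single (i : Fin n) : Xp ξ (Pi.single i 1) = ξ i := by
  have := UGBaux.ofFn_prod_eq_single (fun j => ξ j ^ (Pi.single i 1 : Fin n → ℕ) j) i ?_
  · simpa [Xp] using this
  · intro j hj
    simp [Pi.single_apply, hj]

end WeylCore

namespace WeylCore2

open WeylCore

variable {K : Type*} [Field K] {n : ℕ} {W : Type*} [Ring W] [Algebra K W]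
  {ξ dd : Fin n → W}

lemma dd_mul_Xp (hξ : ∀ i j, ξ i * ξ j = ξ j * ξ i)
    (hrel : ∀ i j, dd i * ξ j - ξ j * dd i = if i = j then (1:W) else 0) :
    ∀ N (lam : Fin n → ℕ), (∑ j, lam j) = N → ∀ i,
      dd i * Xp ξ lam = Xp ξ lam * dd i + lam i • Xp ξ (lam - Pi.single i 1) := by
  intro N
  induction N using Nat.strong_induction_on with
  | _ N IH =>
  intro lam hN i
  rcases Nat.eq_zero_or_pos N with h0 | hpos
  · have hlam : lam = 0 := by
      funext k
      exact (Finset.sum_eq_zero_iff.1 (h0 ▸ hN)) k (Finset.mem_univ k)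
    subst hlam
    simp [Xp_zero]
  · obtain ⟨j, -, hj⟩ : ∃ j ∈ Finset.univ, lam j ≠ 0 :=
      Finset.exists_ne_zero_of_sum_ne_zero (by omega)
    set lam' : Fin n → ℕ := lam - Pi.single j 1 with hlam'
    have hpoint : ∀ k, lam k = (Pi.single j 1 : Fin n → ℕ) k + lam' k := by
      intro k
      simp only [hlam', Pi.sub_apply, Pi.single_apply]
      rcases eq_or_ne k j with rfl | hk
      · rw [if_pos rfl]
        omega
      · simp [hk]
    have hdecomp : lam = Pi.single j 1 + lam' := funext hpoint
    have hsum' : (∑ k, lam' k) < N := by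
      have h1 : (∑ k, lam k) = (∑ k, (Pi.single j 1 : Fin n → ℕ) k) + ∑ k, lam' k := by
        rw [← Finset.sum_add_distrib]
        exact Finset.sum_congr rfl fun k _ => hpoint k
      have h2 : (∑ k, (Pi.single j 1 : Fin n → ℕ) k) = 1 := by simp
      omega
    have hXp : Xp ξ lam = ξ j * Xp ξ lam' := by
      rw [hdecomp, Xp_add hξ, Xp_single]
    have hcomm : dd i * ξ j = ξ j * dd i + (if i = j then (1:W) else 0) := by
      have h := hrel i j
      rw [sub_eq_iff_eq_add] at h
      rw [h, add_comm]
    have hIH := IH _ hsum' lam' rfl i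
    rw [hXp, ← mul_assoc, hcomm, add_mul, mul_assoc, hIH]
    rcases eq_or_ne i j with rfl | hij
    · rw [if_pos (rfl : i = i), one_mul]
      have hlam_i : lam i = lam' i + 1 := by
        rw [hpoint i]; simp [Nat.add_comm]
      have hsub : lam - Pi.single i 1 = lam' := by
        rw [hdecomp, add_tsub_cancel_left]
      rw [hsub, hlam_i, succ_nsmul, mul_add, mul_smul_comm]
      have hlast : lam' i • (ξ i * Xp ξ (lam' - Pi.single i 1)) = lam' i • Xp ξ lam' := by
        rcases Nat.eq_zero_or_pos (lam' i) with h0' | hpos'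
        · simp [h0']
        · have hXp2 : ξ i * Xp ξ (lam' - Pi.single i 1) = Xp ξ lam' := by
            rw [← Xp_single (ξ := ξ) i, ← Xp_add hξ]
            congr 1
            funext k
            simp only [Pi.add_apply, Pi.sub_apply, Pi.single_apply]
            rcases eq_or_ne k i with rfl | hk
            · rw [if_pos rfl]
              omega
            · simp [hk]
          rw [hXp2]
      rw [hlast, ← add_assoc, mul_assoc]
    · simp only [if_neg hij, zero_mul, add_zero]
      have hlam_i : lam i = lam' i := by
        rw [hpoint i]
        simp [Pi.single_apply, hij]
      rw [mul_add, mul_smul_comm, hlam_i, mul_assoc]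
      rcases Nat.eq_zero_or_pos (lam' i) with h0' | hpos'
      · rw [h0']
        simp
      · have heq : ξ j * Xp ξ (lam' - Pi.single i 1) = Xp ξ (lam - Pi.single i 1) := by
          rw [← Xp_single (ξ := ξ) j, ← Xp_add hξ]
          congr 1
          funext k
          have hk := hpoint k
          simp only [Pi.add_apply, Pi.sub_apply, Pi.single_apply] at hk ⊢
          rcases eq_or_ne k i with rfl | hki
          · rw [if_neg hij] at hk ⊢
            rw [if_pos rfl]
            omega
          · rw [if_neg hki]
            rcases eq_or_ne k j with rfl | hkj
            · rw [if_pos rfl] at hk ⊢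
              omega
            · rw [if_neg hkj] at hk ⊢
              omega
        rw [heq]

end WeylCore2

section Master

variable {K : Type*} [Field K] {n : ℕ} {W : Type*} [Ring W] [Algebra K W]
  {ξ dd : Fin n → W} {Φ : W ≃ₗ[K] MvPolynomial (Fin n ⊕ Fin n) K}

open WeylCore WeylCore2

lemma expof_apply {a b : Fin n → ℕ} (x : Fin n ⊕ Fin n) : expof a b x = Sum.elim a b x := by
  simp [expof]

lemma nm_mul_nm (hξ : ∀ i j, ξ i * ξ j = ξ j * ξ i)
    (hdd : ∀ i j, dd i * dd j = dd j * dd i)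
    (hrel : ∀ i j, dd i * ξ j - ξ j * dd i = if i = j then (1:W) else 0)
    (hΦ : ∀ lam mu, Φ (nm ξ dd lam mu) = monomial (expof lam mu) 1) :
    ∀ N (be : Fin n → ℕ), (∑ j, be j) = N → ∀ (al lam mu : Fin n → ℕ),
      ∃ err : MvPolynomial (Fin n ⊕ Fin n) K,
        Φ (nm ξ dd al be * nm ξ dd lam mu)
          = monomial (expof (al + lam) (be + mu)) 1 + err ∧
        ∀ g ∈ err.support, g < expof (al + lam) (be + mu) := by
  intro N
  induction N using Nat.strong_induction_on with
  | _ N IH =>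
  intro be hN al lam mu
  rcases Nat.eq_zero_or_pos N with h0 | hpos
  · have hbe : be = 0 := by
      funext k; exact (Finset.sum_eq_zero_iff.1 (h0 ▸ hN)) k (Finset.mem_univ k)
    subst hbe
    refine ⟨0, ?_, by simp⟩
    have hprod : nm ξ dd al 0 * nm ξ dd lam mu = nm ξ dd (al + lam) mu := by
      rw [nm_eq, nm_eq, nm_eq, Xp_zero, mul_one, ← mul_assoc, ← Xp_add hξ]
    rw [hprod, hΦ, add_zero, zero_add]
  · obtain ⟨j, -, hj⟩ : ∃ j ∈ Finset.univ, be j ≠ 0 :=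
      Finset.exists_ne_zero_of_sum_ne_zero (by omega)
    set be' : Fin n → ℕ := be - Pi.single j 1 with hbe'
    have hpoint : ∀ k, be k = be' k + (Pi.single j 1 : Fin n → ℕ) k := by
      intro k
      simp only [hbe', Pi.sub_apply, Pi.single_apply]
      rcases eq_or_ne k j with rfl | hk
      · rw [if_pos rfl]
        omega
      · simp [hk]
    have hdecomp : be = be' + Pi.single j 1 := funext hpoint
    have hsum' : (∑ k, be' k) < N := by
      have h1 : (∑ k, be k) = (∑ k, be' k) + ∑ k, (Pi.single j 1 : Fin n → ℕ) k := by
        rw [← Finset.sum_add_distrib]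
        exact Finset.sum_congr rfl fun k _ => hpoint k
      have h2 : (∑ k, (Pi.single j 1 : Fin n → ℕ) k) = 1 := by simp
      omega
    have hsplit : nm ξ dd al be * nm ξ dd lam mu
        = nm ξ dd al be' * nm ξ dd lam (Pi.single j 1 + mu)
          + lam j • (nm ξ dd al be' * nm ξ dd (lam - Pi.single j 1) mu) := by
      have h1 : Xp dd be = Xp dd be' * dd j := by
        rw [hdecomp, Xp_add hdd, Xp_single]
      have h2 : dd j * Xp ξ lam = Xp ξ lam * dd j + lam j • Xp ξ (lam - Pi.single j 1) :=
        dd_mul_Xp hξ hrel _ lam rfl j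
      have h3 : dd j * Xp dd mu = Xp dd (Pi.single j 1 + mu) := by
        rw [Xp_add hdd, Xp_single]
      have key : dd j * (Xp ξ lam * Xp dd mu)
          = Xp ξ lam * Xp dd (Pi.single j 1 + mu)
            + lam j • (Xp ξ (lam - Pi.single j 1) * Xp dd mu) := by
        rw [← mul_assoc, h2, add_mul, mul_assoc, h3, smul_mul_assoc]
      simp only [nm_eq]
      rw [h1]
      calc Xp ξ al * (Xp dd be' * dd j) * (Xp ξ lam * Xp dd mu)
          = Xp ξ al * Xp dd be' * (dd j * (Xp ξ lam * Xp dd mu)) := by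
            noncomm_ring
        _ = Xp ξ al * Xp dd be' * (Xp ξ lam * Xp dd (Pi.single j 1 + mu)
              + lam j • (Xp ξ (lam - Pi.single j 1) * Xp dd mu)) := by rw [key]
        _ = _ := by
            rw [mul_add, mul_smul_comm, ← mul_assoc, ← mul_assoc]
    obtain ⟨e1, he1, he1s⟩ := IH _ hsum' be' rfl al lam (Pi.single j 1 + mu)
    obtain ⟨e2, he2, he2s⟩ := IH _ hsum' be' rfl al (lam - Pi.single j 1) mu
    have htop : expof (al + lam) (be' + (Pi.single j 1 + mu)) = expof (al + lam) (be + mu) := by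
      congr 1
      funext k
      simp only [Pi.add_apply]
      rw [hpoint k]
      omega
    have h2lt : expof (al + (lam - Pi.single j 1)) (be' + mu) < expof (al + lam) (be + mu) := by
      rw [lt_iff_le_and_ne]
      constructor
      · rw [Finsupp.le_def]
        intro x
        cases x with
        | inl i =>
          simp only [expof_apply, Sum.elim_inl, Pi.add_apply, Pi.sub_apply, Pi.single_apply]
          have : lam i - (if i = j then 1 else 0) ≤ lam i := Nat.sub_le _ _
          omega
        | inr i =>
          simp only [expof_apply, Sum.elim_inr, Pi.add_apply]
          have := hpoint i
          omega
      · intro hEq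
        have h : be' j + mu j = be j + mu j := by
          have h0 : (expof (al + (lam - Pi.single j 1)) (be' + mu)) (Sum.inr j)
              = (expof (al + lam) (be + mu)) (Sum.inr j) := by rw [hEq]
          rw [expof_apply, expof_apply] at h0
          exact h0
        have hp : be j = be' j + 1 := by
          have h1 := hpoint j
          rw [Pi.single_eq_same] at h1
          exact h1
        omega
    refine ⟨e1 + lam j • (monomial (expof (al + (lam - Pi.single j 1)) (be' + mu)) 1 + e2),
      ?_, ?_⟩
    · rw [hsplit, map_add, map_nsmul, he1, he2, htop, add_assoc]
    · intro g hg
      rcases Finset.mem_union.1 (MvPolynomial.support_add hg) with hg1 | hg2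
      · exact htop ▸ he1s g hg1
      · have hg3 := MvPolynomial.support_smul hg2
        rcases Finset.mem_union.1 (MvPolynomial.support_add hg3) with hg4 | hg5
        · have : g = expof (al + (lam - Pi.single j 1)) (be' + mu) := by
            have := MvPolynomial.support_monomial_subset hg4
            simpa using this
          rw [this]
          exact h2lt
        · exact lt_trans (he2s g hg5) h2lt

end Master


section OrderFramework

variable {K : Type*} [Field K] {n : ℕ} {W : Type*} [Ring W] [Algebra K W]
  {ξ dd : Fin n → W} {Φ : W ≃ₗ[K] MvPolynomial (Fin n ⊕ Fin n) K}

lemma expof_proj (d : (Fin n ⊕ Fin n) →₀ ℕ) :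
    expof (fun i => d (Sum.inl i)) (fun i => d (Sum.inr i)) = d := by
  ext x
  cases x <;> rw [expof_apply] <;> rfl

lemma Phi_nmD (hΦ : ∀ lam mu, Φ (nm ξ dd lam mu) = monomial (expof lam mu) 1)
    (d : (Fin n ⊕ Fin n) →₀ ℕ) : Φ ((nmD ξ dd d : W)) = monomial d 1 := by
  show Φ (nm ξ dd _ _) = _
  rw [hΦ, expof_proj]

lemma nmD_inj (hΦ : ∀ lam mu, Φ (nm ξ dd lam mu) = monomial (expof lam mu) 1)
    {d e : (Fin n ⊕ Fin n) →₀ ℕ} (h : nmD ξ dd d = nmD ξ dd e) : d = e := by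
  have h1 : Φ ((nmD ξ dd d : W)) = Φ ((nmD ξ dd e : W)) := by rw [h]
  rw [Phi_nmD hΦ, Phi_nmD hΦ] at h1
  rcases (MvPolynomial.monomial_eq_monomial_iff _ _ _ _).1 h1 with ⟨h2, -⟩ | ⟨h2, -⟩
  · exact h2
  · exact absurd h2 one_ne_zero

variable {r : TO ↥(NormalMonomials ξ dd)}

lemma rD_refl (d : (Fin n ⊕ Fin n) →₀ ℕ) : rD ξ dd r d d := TOaux.rel_refl r _

lemma rD_total (d e : (Fin n ⊕ Fin n) →₀ ℕ) : rD ξ dd r d e ∨ rD ξ dd r e d :=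
  TOaux.rel_total r _ _

lemma rD_trans {d e f : (Fin n ⊕ Fin n) →₀ ℕ} (h1 : rD ξ dd r d e) (h2 : rD ξ dd r e f) :
    rD ξ dd r d f := TOaux.rel_trans r h1 h2

lemma rD_antisymm (hΦ : ∀ lam mu, Φ (nm ξ dd lam mu) = monomial (expof lam mu) 1)
    {d e : (Fin n ⊕ Fin n) →₀ ℕ} (h1 : rD ξ dd r d e) (h2 : rD ξ dd r e d) : d = e :=
  nmD_inj hΦ (TOaux.rel_antisymm r h1 h2)

lemma nmD_zero : nmD ξ dd 0 = nmEl ξ dd 0 0 := by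
  unfold nmD
  congr 1 <;> funext i <;> rfl

lemma rD_zero (hr : IsNormalOrdering ξ dd r) (d : (Fin n ⊕ Fin n) →₀ ℕ) : rD ξ dd r 0 d := by
  show r.rel (nmD ξ dd 0) (nmD ξ dd d)
  rw [nmD_zero]
  exact hr.1 _ _

lemma nmD_add_eq (d m : (Fin n ⊕ Fin n) →₀ ℕ) :
    nmD ξ dd (d + m) = nmEl ξ dd ((fun i => d (Sum.inl i)) + (fun i => m (Sum.inl i)))
      ((fun i => d (Sum.inr i)) + (fun i => m (Sum.inr i))) := by
  unfold nmD
  congr 1 <;> funext i <;> simp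

lemma rD_add (hr : IsNormalOrdering ξ dd r) {d e : (Fin n ⊕ Fin n) →₀ ℕ}
    (m : (Fin n ⊕ Fin n) →₀ ℕ) (h : rD ξ dd r d e) : rD ξ dd r (d + m) (e + m) := by
  have h2 := hr.2 (fun i => d (Sum.inl i)) (fun i => d (Sum.inr i))
    (fun i => e (Sum.inl i)) (fun i => e (Sum.inr i))
    (fun i => m (Sum.inl i)) (fun i => m (Sum.inr i)) h
  show r.rel (nmD ξ dd (d + m)) (nmD ξ dd (e + m))
  rw [nmD_add_eq, nmD_add_eq]
  exact h2

lemma rD_le (hr : IsNormalOrdering ξ dd r) {d e : (Fin n ⊕ Fin n) →₀ ℕ} (h : d ≤ e) :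
    rD ξ dd r d e := by
  have h1 := rD_add hr d (rD_zero hr (e - d))
  rw [zero_add, tsub_add_cancel_of_le h] at h1
  exact h1

lemma rD_wf (hΦ : ∀ lam mu, Φ (nm ξ dd lam mu) = monomial (expof lam mu) 1)
    (hr : IsNormalOrdering ξ dd r) :
    WellFounded (fun d e => rD ξ dd r d e ∧ d ≠ e) := by
  haveI : IsIrrefl ((Fin n ⊕ Fin n) →₀ ℕ) (fun d e => rD ξ dd r d e ∧ d ≠ e) :=
    ⟨fun a h => h.2 rfl⟩
  haveI : IsTrans ((Fin n ⊕ Fin n) →₀ ℕ) (fun d e => rD ξ dd r d e ∧ d ≠ e) :=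
    ⟨fun a b c h1 h2 => ⟨rD_trans h1.1 h2.1,
      fun hac => h1.2 (rD_antisymm hΦ h1.1 (hac ▸ h2.1))⟩⟩
  haveI : IsStrictOrder ((Fin n ⊕ Fin n) →₀ ℕ) (fun d e => rD ξ dd r d e ∧ d ≠ e) := { }
  rw [RelEmbedding.wellFounded_iff_isEmpty]
  refine ⟨fun f => ?_⟩
  obtain ⟨a, b, hab, hle⟩ :=
    (wellQuasiOrdered_le (α := (Fin n ⊕ Fin n) →₀ ℕ)) (fun i => f i)
  have hlt : rD ξ dd r (f b) (f a) ∧ f b ≠ f a := f.map_rel_iff.2 hab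
  have h1 : rD ξ dd r (f a) (f b) := rD_le hr hle
  exact hlt.2 (rD_antisymm hΦ hlt.1 h1)

lemma exists_max_finset (s : Finset ((Fin n ⊕ Fin n) →₀ ℕ)) (hs : s.Nonempty) :
    ∃ d ∈ s, ∀ c ∈ s, rD ξ dd r c d := by
  induction hs using Finset.Nonempty.cons_induction with
  | singleton a =>
    exact ⟨a, Finset.mem_singleton_self a, fun c hc => by
      rw [Finset.mem_singleton] at hc
      rw [hc]
      exact rD_refl a⟩
  | cons a s ha hs IH =>
    obtain ⟨d, hd, hmax⟩ := IH
    rcases rD_total (r := r) a d with had | hda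
    · refine ⟨d, Finset.mem_cons_of_mem hd, fun c hc => ?_⟩
      rcases Finset.mem_cons.1 hc with rfl | hc
      · exact had
      · exact hmax c hc
    · refine ⟨a, Finset.mem_cons_self a s, fun c hc => ?_⟩
      rcases Finset.mem_cons.1 hc with rfl | hc
      · exact rD_refl c
      · exact rD_trans (hmax c hc) hda

lemma exists_isLTerm (x : W) (hx : x ≠ 0) : ∃ d, IsLTerm ξ dd Φ r x d := by
  have hne : Φ x ≠ 0 := fun h => hx (by
    have := congrArg Φ.symm h
    simpa using this)
  have hsupp : (Φ x).support.Nonempty := by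
    rw [Finset.nonempty_iff_ne_empty]
    intro h
    exact hne (MvPolynomial.support_eq_empty.1 h)
  obtain ⟨d, hd, hmax⟩ := exists_max_finset (r := r) _ hsupp
  exact ⟨d, hd, hmax⟩

lemma isLTerm_unique (hΦ : ∀ lam mu, Φ (nm ξ dd lam mu) = monomial (expof lam mu) 1)
    {x : W} {d e : (Fin n ⊕ Fin n) →₀ ℕ}
    (h1 : IsLTerm ξ dd Φ r x d) (h2 : IsLTerm ξ dd Φ r x e) : d = e :=
  rD_antisymm hΦ (h2.2 d h1.1) (h1.2 e h2.1)

end OrderFramework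



section MulLead

variable {K : Type*} [Field K] {n : ℕ} {W : Type*} [Ring W] [Algebra K W]
  {ξ dd : Fin n → W} {Φ : W ≃ₗ[K] MvPolynomial (Fin n ⊕ Fin n) K}

lemma expof_add_proj (m g : (Fin n ⊕ Fin n) →₀ ℕ) :
    expof ((fun i => m (Sum.inl i)) + fun i => g (Sum.inl i))
      ((fun i => m (Sum.inr i)) + fun i => g (Sum.inr i)) = m + g := by
  ext x
  cases x <;> rw [expof_apply] <;> simp

lemma Phi_mul_lead (hξ : ∀ i j, ξ i * ξ j = ξ j * ξ i)
    (hdd : ∀ i j, dd i * dd j = dd j * dd i)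
    (hrel : ∀ i j, dd i * ξ j - ξ j * dd i = if i = j then (1:W) else 0)
    (hΦ : ∀ lam mu, Φ (nm ξ dd lam mu) = monomial (expof lam mu) 1)
    (m : (Fin n ⊕ Fin n) →₀ ℕ) (b : W) :
    (∀ g ∈ (Φ ((nmD ξ dd m : W) * b)).support, ∃ g' ∈ (Φ b).support, g ≤ m + g') ∧
    (∀ d : (Fin n ⊕ Fin n) →₀ ℕ, (∀ g' ∈ (Φ b).support, ¬ d < g') →
      coeff (m + d) (Φ ((nmD ξ dd m : W) * b)) = coeff d (Φ b)) := by
  classical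
  set p := Φ b with hp
  have hmm : ∀ g : (Fin n ⊕ Fin n) →₀ ℕ, ∃ err : MvPolynomial (Fin n ⊕ Fin n) K,
      Φ ((nmD ξ dd m : W) * (nmD ξ dd g : W)) = monomial (m + g) 1 + err ∧
      ∀ h ∈ err.support, h < m + g := by
    intro g
    obtain ⟨err, he, hs⟩ := nm_mul_nm hξ hdd hrel hΦ (∑ j, m (Sum.inr j))
      (fun i => m (Sum.inr i)) rfl (fun i => m (Sum.inl i))
      (fun i => g (Sum.inl i)) (fun i => g (Sum.inr i))
    rw [expof_add_proj] at he hs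
    exact ⟨err, he, hs⟩
  choose err herr herrs using hmm
  have hb : b = ∑ g ∈ p.support, (coeff g p) • ((nmD ξ dd g : W)) := by
    apply Φ.injective
    rw [map_sum]
    have : ∀ g ∈ p.support, Φ ((coeff g p) • (nmD ξ dd g : W)) = monomial g (coeff g p) := by
      intro g _
      rw [map_smul, Phi_nmD hΦ, MvPolynomial.smul_monomial, smul_eq_mul, mul_one]
    rw [Finset.sum_congr rfl this, MvPolynomial.support_sum_monomial_coeff]
  have hbmul : Φ ((nmD ξ dd m : W) * b)
      = ∑ g ∈ p.support, (coeff g p) • (monomial (m + g) 1 + err g) := by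
    conv_lhs => rw [hb]
    rw [Finset.mul_sum, map_sum]
    refine Finset.sum_congr rfl fun g _ => ?_
    rw [mul_smul_comm, map_smul, herr]
  constructor
  · intro g hg
    rw [hbmul] at hg
    have hg2 := MvPolynomial.support_sum hg
    rw [Finset.mem_biUnion] at hg2
    obtain ⟨g', hg', hmem⟩ := hg2
    refine ⟨g', hg', ?_⟩
    have hg3 := MvPolynomial.support_smul hmem
    rcases Finset.mem_union.1 (MvPolynomial.support_add hg3) with h4 | h5
    · have : g = m + g' := by
        have := MvPolynomial.support_monomial_subset h4
        simpa using this
      exact this.le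
    · exact (herrs g' g h5).le
  · intro d hd
    rw [hbmul, MvPolynomial.coeff_sum]
    have hterm : ∀ g ∈ p.support, g ≠ d →
        coeff (m + d) ((coeff g p) • (monomial (m + g) 1 + err g)) = 0 := by
      intro g hg hgd
      rw [MvPolynomial.coeff_smul, MvPolynomial.coeff_add, MvPolynomial.coeff_monomial,
        if_neg (fun h => hgd (add_left_cancel h))]
      have hze : coeff (m + d) (err g) = 0 := by
        by_contra hne
        have hmem : m + d ∈ (err g).support := MvPolynomial.mem_support_iff.2 hne
        have hlt := herrs g _ hmem
        exact hd g hg (lt_of_add_lt_add_left hlt)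
      rw [hze, zero_add, smul_zero]
    have hzero : d ∉ p.support →
        coeff (m + d) ((coeff d p) • (monomial (m + d) 1 + err d)) = 0 := by
      intro h
      rw [MvPolynomial.notMem_support_iff.1 h, zero_smul, MvPolynomial.coeff_zero]
    rw [Finset.sum_eq_single d hterm hzero]
    by_cases hds : d ∈ p.support
    · have hze : coeff (m + d) (err d) = 0 := by
        by_contra hne
        have hmem : m + d ∈ (err d).support := MvPolynomial.mem_support_iff.2 hne
        exact lt_irrefl _ (herrs d _ hmem)
      rw [MvPolynomial.coeff_smul, MvPolynomial.coeff_add, MvPolynomial.coeff_monomial,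
        if_pos rfl, hze, add_zero, smul_eq_mul, mul_one]
    · simp [MvPolynomial.notMem_support_iff.1 hds]

lemma reduce_step (hξ : ∀ i j, ξ i * ξ j = ξ j * ξ i)
    (hdd : ∀ i j, dd i * dd j = dd j * dd i)
    (hrel : ∀ i j, dd i * ξ j - ξ j * dd i = if i = j then (1:W) else 0)
    (hΦ : ∀ lam mu, Φ (nm ξ dd lam mu) = monomial (expof lam mu) 1)
    {r : TO ↥(NormalMonomials ξ dd)} (hr : IsNormalOrdering ξ dd r)
    {b : W} {db f : (Fin n ⊕ Fin n) →₀ ℕ}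
    (hb : IsLTerm ξ dd Φ r b db) (hdvd : db ≤ f) :
    ∃ w : W, coeff f (Φ (w * b)) = 1 ∧
      ∀ r' : TO ↥(NormalMonomials ξ dd), IsNormalOrdering ξ dd r' →
        IsLTerm ξ dd Φ r' b db →
        ∀ g ∈ (Φ (w * b)).support, rD ξ dd r' g f := by
  set m := f - db with hm
  have hmdb : m + db = f := tsub_add_cancel_of_le hdvd
  have hcoef : coeff db (Φ b) ≠ 0 := MvPolynomial.mem_support_iff.1 hb.1
  have hd : ∀ g' ∈ (Φ b).support, ¬ db < g' := by
    intro g' hg' hlt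
    have h1 : rD ξ dd r g' db := hb.2 g' hg'
    have h2 : rD ξ dd r db g' := rD_le hr hlt.le
    exact hlt.ne (rD_antisymm hΦ h2 h1)
  obtain ⟨ha, hbco⟩ := Phi_mul_lead hξ hdd hrel hΦ m b
  refine ⟨(coeff db (Φ b))⁻¹ • (nmD ξ dd m : W), ?_, ?_⟩
  · rw [smul_mul_assoc, map_smul, MvPolynomial.coeff_smul, ← hmdb, hbco db hd,
      smul_eq_mul, inv_mul_cancel₀ hcoef]
  · intro r' hr' hb' g hg
    rw [smul_mul_assoc, map_smul] at hg
    have hg2 := MvPolynomial.support_smul hg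
    obtain ⟨g', hg'm, hle⟩ := ha g hg2
    have h1 : rD ξ dd r' g (g' + m) := rD_le hr' (by rwa [add_comm] at hle)
    have h2 : rD ξ dd r' (g' + m) (db + m) := rD_add hr' m (hb'.2 g' hg'm)
    have h3 : db + m = f := by rw [add_comm]; exact hmdb
    exact rD_trans h1 (h3 ▸ h2)

end MulLead



section Apps

variable {K : Type*} [Field K] {n : ℕ} {W : Type*} [Ring W] [Algebra K W]
  {ξ dd : Fin n → W} {Φ : W ≃ₗ[K] MvPolynomial (Fin n ⊕ Fin n) K}

lemma K_smul_mem (L : Submodule W W) (c : K) {z : W} (hz : z ∈ L) : c • z ∈ L := by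
  rw [algebra_compatible_smul W c z]
  exact L.smul_mem _ hz

lemma support_sub' {p q : MvPolynomial (Fin n ⊕ Fin n) K} :
    (p - q).support ⊆ p.support ∪ q.support := by
  classical
  intro g hg
  rw [sub_eq_add_neg] at hg
  rcases Finset.mem_union.1 (MvPolynomial.support_add hg) with h | h
  · exact Finset.mem_union_left _ h
  · rw [MvPolynomial.support_neg] at h
    exact Finset.mem_union_right _ h

lemma span_ge (hξ : ∀ i j, ξ i * ξ j = ξ j * ξ i)
    (hdd : ∀ i j, dd i * dd j = dd j * dd i)
    (hrel : ∀ i j, dd i * ξ j - ξ j * dd i = if i = j then (1:W) else 0)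
    (hΦ : ∀ lam mu, Φ (nm ξ dd lam mu) = monomial (expof lam mu) 1)
    {r : TO ↥(NormalMonomials ξ dd)} (hr : IsNormalOrdering ξ dd r)
    (L : Submodule W W) (B : Finset W) (hBL : (B : Set W) ⊆ (L : Set W))
    (hlt : ∀ x ∈ L, x ≠ 0 → ∀ f, IsLTerm ξ dd Φ r x f →
      ∃ b ∈ B, ∃ db, IsLTerm ξ dd Φ r b db ∧ db ≤ f) :
    Submodule.span W (B : Set W) = L := by
  apply le_antisymm (Submodule.span_le.2 hBL)
  have key : ∀ f : (Fin n ⊕ Fin n) →₀ ℕ, ∀ x, x ∈ L → x ≠ 0 →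
      IsLTerm ξ dd Φ r x f → x ∈ Submodule.span W (B : Set W) := by
    intro f
    refine (rD_wf hΦ hr).induction
      (C := fun f => ∀ x, x ∈ L → x ≠ 0 → IsLTerm ξ dd Φ r x f →
        x ∈ Submodule.span W (B : Set W)) f ?_
    intro f IH x hxL hx0 hxf
    obtain ⟨b, hbB, db, hdb, hdvd⟩ := hlt x hxL hx0 f hxf
    obtain ⟨w, hco, hsup⟩ := reduce_step hξ hdd hrel hΦ hr hdb hdvd
    set c : K := coeff f (Φ x) with hc
    set x1 : W := x - c • (w * b) with hx1def
    have hwbL : w * b ∈ L := by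
      have hbmem : b ∈ L := hBL hbB
      have := L.smul_mem w hbmem
      rwa [smul_eq_mul] at this
    have hx1L : x1 ∈ L := L.sub_mem hxL (K_smul_mem L c hwbL)
    have hwbS : w * b ∈ Submodule.span W (B : Set W) := by
      have hbS := Submodule.subset_span (R := W) (s := (B : Set W)) hbB
      have := Submodule.smul_mem _ w hbS
      rwa [smul_eq_mul] at this
    have hcwbS : c • (w * b) ∈ Submodule.span W (B : Set W) :=
      K_smul_mem _ c hwbS
    have hxeq : x = x1 + c • (w * b) := by rw [hx1def, sub_add_cancel]
    have hPhix1 : Φ x1 = Φ x - c • Φ (w * b) := by rw [hx1def, map_sub, map_smul]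
    have hfnot : f ∉ (Φ x1).support := by
      rw [MvPolynomial.notMem_support_iff, hPhix1, MvPolynomial.coeff_sub,
        MvPolynomial.coeff_smul, hco, smul_eq_mul, mul_one, sub_self]
    have hsub : ∀ g ∈ (Φ x1).support, rD ξ dd r g f := by
      intro g hgm
      rw [hPhix1] at hgm
      rcases Finset.mem_union.1 (support_sub' hgm) with h | h
      · exact hxf.2 g h
      · exact hsup r hr hdb g (MvPolynomial.support_smul h)
    by_cases hx10 : x1 = 0
    · rw [hxeq, hx10, zero_add]
      exact hcwbS
    · obtain ⟨f1, hf1⟩ := exists_isLTerm (Φ := Φ) (r := r) x1 hx10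
      have hne : f1 ≠ f := fun h => hfnot (h ▸ hf1.1)
      have hmem := IH f1 ⟨hsub f1 hf1.1, hne⟩ x1 hx1L hx10 hf1
      rw [hxeq]
      exact Submodule.add_mem _ hmem hcwbS
  intro x hx
  by_cases hx0 : x = 0
  · rw [hx0]
    exact Submodule.zero_mem _
  · obtain ⟨f, hf⟩ := exists_isLTerm (Φ := Φ) (r := r) x hx0
    exact key f x hx hx0 hf

lemma transfer (hξ : ∀ i j, ξ i * ξ j = ξ j * ξ i)
    (hdd : ∀ i j, dd i * dd j = dd j * dd i)
    (hrel : ∀ i j, dd i * ξ j - ξ j * dd i = if i = j then (1:W) else 0)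
    (hΦ : ∀ lam mu, Φ (nm ξ dd lam mu) = monomial (expof lam mu) 1)
    {r r' : TO ↥(NormalMonomials ξ dd)}
    (hr : IsNormalOrdering ξ dd r) (hr' : IsNormalOrdering ξ dd r')
    (L : Submodule W W) (B : Finset W) (hBL : (B : Set W) ⊆ (L : Set W))
    (hBlt : ∀ x ∈ L, x ≠ 0 → ∀ f, IsLTerm ξ dd Φ r x f →
      ∃ b ∈ B, ∃ db, IsLTerm ξ dd Φ r b db ∧ IsLTerm ξ dd Φ r' b db ∧ db ≤ f) :
    ∀ x ∈ L, x ≠ 0 → ∀ e, IsLTerm ξ dd Φ r' x e →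
      ∃ b ∈ B, ∃ db, IsLTerm ξ dd Φ r' b db ∧ db ≤ e := by
  have key : ∀ f : (Fin n ⊕ Fin n) →₀ ℕ, ∀ x, x ∈ L → x ≠ 0 →
      IsLTerm ξ dd Φ r x f → ∀ e, IsLTerm ξ dd Φ r' x e →
      ∃ b ∈ B, ∃ db, IsLTerm ξ dd Φ r' b db ∧ db ≤ e := by
    intro f
    refine (rD_wf hΦ hr).induction
      (C := fun f => ∀ x, x ∈ L → x ≠ 0 → IsLTerm ξ dd Φ r x f →
        ∀ e, IsLTerm ξ dd Φ r' x e →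
        ∃ b ∈ B, ∃ db, IsLTerm ξ dd Φ r' b db ∧ db ≤ e) f ?_
    intro f IH x hxL hx0 hxf e hxe
    obtain ⟨b, hbB, db, hdbr, hdbr', hdvd⟩ := hBlt x hxL hx0 f hxf
    by_cases hef : f = e
    · exact ⟨b, hbB, db, hdbr', hef ▸ hdvd⟩
    obtain ⟨w, hco, hsup⟩ := reduce_step hξ hdd hrel hΦ hr hdbr hdvd
    set c : K := coeff f (Φ x) with hc
    set x1 : W := x - c • (w * b) with hx1def
    have hwbL : w * b ∈ L := by
      have hbmem : b ∈ L := hBL hbB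
      have := L.smul_mem w hbmem
      rwa [smul_eq_mul] at this
    have hx1L : x1 ∈ L := L.sub_mem hxL (K_smul_mem L c hwbL)
    have hPhix1 : Φ x1 = Φ x - c • Φ (w * b) := by rw [hx1def, map_sub, map_smul]
    have hfnot : f ∉ (Φ x1).support := by
      rw [MvPolynomial.notMem_support_iff, hPhix1, MvPolynomial.coeff_sub,
        MvPolynomial.coeff_smul, hco, smul_eq_mul, mul_one, sub_self]
    have hewb : coeff e (Φ (w * b)) = 0 := by
      by_contra hne
      have hmem : e ∈ (Φ (w * b)).support := MvPolynomial.mem_support_iff.2 hne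
      have h1 : rD ξ dd r' e f := hsup r' hr' hdbr' e hmem
      have h2 : rD ξ dd r' f e := hxe.2 f hxf.1
      exact hef (rD_antisymm hΦ h2 h1)
    have hesupp : e ∈ (Φ x1).support := by
      rw [MvPolynomial.mem_support_iff, hPhix1, MvPolynomial.coeff_sub,
        MvPolynomial.coeff_smul, hewb, smul_eq_mul, mul_zero, sub_zero]
      exact MvPolynomial.mem_support_iff.1 hxe.1
    have hx10 : x1 ≠ 0 := by
      intro h
      rw [h] at hesupp
      simp at hesupp
    have hsubr : ∀ g ∈ (Φ x1).support, rD ξ dd r g f := by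
      intro g hgm
      rw [hPhix1] at hgm
      rcases Finset.mem_union.1 (support_sub' hgm) with h | h
      · exact hxf.2 g h
      · exact hsup r hr hdbr g (MvPolynomial.support_smul h)
    have hxe1 : IsLTerm ξ dd Φ r' x1 e := by
      refine ⟨hesupp, fun g hgm => ?_⟩
      rw [hPhix1] at hgm
      rcases Finset.mem_union.1 (support_sub' hgm) with h | h
      · exact hxe.2 g h
      · have h1 : rD ξ dd r' g f := hsup r' hr' hdbr' g (MvPolynomial.support_smul h)
        exact rD_trans h1 (hxe.2 f hxf.1)
    obtain ⟨f1, hf1⟩ := exists_isLTerm (Φ := Φ) (r := r) x1 hx10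
    have hne : f1 ≠ f := fun h => hfnot (h ▸ hf1.1)
    exact IH f1 ⟨hsubr f1 hf1.1, hne⟩ x1 hx1L hx10 hf1 e hxe1
  intro x hx hx0 e hxe
  obtain ⟨f, hf⟩ := exists_isLTerm (Φ := Φ) (r := r) x hx0
  exact key f x hx hx0 hf e hxe

end Apps



section GB

variable {K : Type*} [Field K] {n : ℕ} {W : Type*} [Ring W] [Algebra K W]
  {ξ dd : Fin n → W} {Φ : W ≃ₗ[K] MvPolynomial (Fin n ⊕ Fin n) K}

lemma lt_set_eq (r : TO ↥(NormalMonomials ξ dd)) (P : W → Prop) :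
    {p : MvPolynomial (Fin n ⊕ Fin n) K |
      ∃ x, P x ∧ x ≠ 0 ∧ ∃ d, IsLTerm ξ dd Φ r x d ∧ p = monomial d 1}
      = (fun d => monomial d (1:K)) '' {d | ∃ x, P x ∧ x ≠ 0 ∧ IsLTerm ξ dd Φ r x d} := by
  ext p
  constructor
  · rintro ⟨x, hxP, hx0, d, hlt, rfl⟩
    exact ⟨d, ⟨x, hxP, hx0, hlt⟩, rfl⟩
  · rintro ⟨d, ⟨x, hxP, hx0, hlt⟩, rfl⟩
    exact ⟨x, hxP, hx0, d, hlt, rfl⟩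

lemma exists_finset_span_eq {R M : Type*} [Ring R] [AddCommGroup M] [Module R M]
    (S : Set M) (hfg : (Submodule.span R S).FG) :
    ∃ T : Finset M, ↑T ⊆ S ∧ Submodule.span R (T : Set M) = Submodule.span R S := by
  classical
  obtain ⟨G, hG⟩ := hfg
  have hmem : ∀ g ∈ G, ∃ T : Finset M, ↑T ⊆ S ∧ g ∈ Submodule.span R (T : Set M) := by
    intro g hg
    refine Submodule.mem_span_finite_of_mem_span ?_
    rw [← hG]
    exact Submodule.subset_span hg
  choose T hT1 hT2 using hmem
  refine ⟨G.attach.biUnion (fun g => T g.1 g.2), ?_, ?_⟩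
  · intro x hx
    rw [Finset.coe_biUnion] at hx
    simp only [Set.mem_iUnion] at hx
    obtain ⟨g, hg, hxg⟩ := hx
    exact hT1 g.1 g.2 hxg
  · apply le_antisymm
    · refine Submodule.span_le.2 ?_
      intro x hx
      rw [Finset.coe_biUnion] at hx
      simp only [Set.mem_iUnion] at hx
      obtain ⟨g, hg, hxg⟩ := hx
      exact Submodule.subset_span (hT1 g.1 g.2 hxg)
    · rw [← hG]
      refine Submodule.span_le.2 ?_
      intro g hg
      refine Submodule.span_mono ?_ (hT2 g hg)
      intro y hy
      rw [Finset.coe_biUnion]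
      simp only [Set.mem_iUnion]
      exact ⟨⟨g, hg⟩, Finset.mem_attach _ _, hy⟩

lemma gb_nbhd [DecidableEq W] (hξ : ∀ i j, ξ i * ξ j = ξ j * ξ i)
    (hdd : ∀ i j, dd i * dd j = dd j * dd i)
    (hrel : ∀ i j, dd i * ξ j - ξ j * dd i = if i = j then (1:W) else 0)
    (hΦ : ∀ lam mu, Φ (nm ξ dd lam mu) = monomial (expof lam mu) 1)
    {r r' : TO ↥(NormalMonomials ξ dd)}
    (hr : IsNormalOrdering ξ dd r) (hr' : IsNormalOrdering ξ dd r')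
    (L : Submodule W W)
    (D0 : Finset ((Fin n ⊕ Fin n) →₀ ℕ)) (F : ((Fin n ⊕ Fin n) →₀ ℕ) → W)
    (hF : ∀ d ∈ D0, F d ∈ L ∧ F d ≠ 0 ∧ IsLTerm ξ dd Φ r (F d) d)
    (hspan : Ideal.span ((fun d => monomial d (1:K)) '' (D0 : Set ((Fin n ⊕ Fin n) →₀ ℕ)))
      = LTIdeal ξ dd Φ r (L : Set W))
    (hF' : ∀ d ∈ D0, IsLTerm ξ dd Φ r' (F d) d) :
    IsGroebnerBasis ξ dd Φ r' L (D0.image F) := by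
  classical
  have hBL : ((D0.image F : Finset W) : Set W) ⊆ (L : Set W) := by
    intro b hb
    rw [Finset.coe_image] at hb
    obtain ⟨d, hd, rfl⟩ := hb
    exact (hF d hd).1
  have hBlt : ∀ x ∈ L, x ≠ 0 → ∀ f, IsLTerm ξ dd Φ r x f →
      ∃ b ∈ D0.image F, ∃ db, IsLTerm ξ dd Φ r b db ∧ IsLTerm ξ dd Φ r' b db ∧ db ≤ f := by
    intro x hxL hx0 f hf
    have hmem : (monomial f 1 : MvPolynomial (Fin n ⊕ Fin n) K)
        ∈ LTIdeal ξ dd Φ r (L : Set W) := by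
      apply Ideal.subset_span
      exact ⟨x, hxL, hx0, f, hf, rfl⟩
    rw [← hspan, mem_ideal_span_monomial_image] at hmem
    obtain ⟨d, hdD, hdle⟩ := hmem f (by
      rw [MvPolynomial.mem_support_iff, MvPolynomial.coeff_monomial, if_pos rfl]
      exact one_ne_zero)
    refine ⟨F d, Finset.mem_image_of_mem F hdD, d, (hF d hdD).2.2, hF' d hdD, hdle⟩
  have claim : ∀ x ∈ L, x ≠ 0 → ∀ e, IsLTerm ξ dd Φ r' x e →
      ∃ b ∈ D0.image F, ∃ db, IsLTerm ξ dd Φ r' b db ∧ db ≤ e :=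
    transfer hξ hdd hrel hΦ hr hr' L _ hBL hBlt
  refine ⟨hBL, span_ge hξ hdd hrel hΦ hr' L _ hBL claim, ?_⟩
  apply le_antisymm
  · apply Ideal.span_le.2
    rintro p ⟨x, hxL, hx0, e, he, rfl⟩
    rw [SetLike.mem_coe, lt_set_eq (Φ := Φ) r' (fun b => b ∈ D0.image F),
      mem_ideal_span_monomial_image]
    intro xi hxi
    have hxie : xi = e := by
      have := MvPolynomial.support_monomial_subset hxi
      simpa using this
    subst hxie
    obtain ⟨b, hbB, db, hdb, hdvd⟩ := claim x hxL hx0 xi he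
    have hb0 : b ≠ 0 := by
      obtain ⟨d', hd', rfl⟩ := Finset.mem_image.1 hbB
      exact (hF d' hd').2.1
    exact ⟨db, ⟨b, hbB, hb0, hdb⟩, hdvd⟩
  · apply Ideal.span_le.2
    rintro p ⟨b, hbB, hb0, d, hd, rfl⟩
    have hbL : b ∈ (L : Set W) := hBL (Finset.mem_coe.2 hbB)
    exact Ideal.subset_span ⟨b, hbL, hb0, d, hd, rfl⟩

lemma gb_superset {r' : TO ↥(NormalMonomials ξ dd)} (L : Submodule W W) (B V : Finset W)
    (hBV : B ⊆ V) (hVL : (V : Set W) ⊆ (L : Set W))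
    (hgb : IsGroebnerBasis ξ dd Φ r' L B) : IsGroebnerBasis ξ dd Φ r' L V := by
  obtain ⟨h1, h2, h3⟩ := hgb
  refine ⟨hVL, ?_, ?_⟩
  · apply le_antisymm (Submodule.span_le.2 hVL)
    rw [← h2]
    exact Submodule.span_mono (Finset.coe_subset.2 hBV)
  · apply le_antisymm
    · rw [h3]
      apply Ideal.span_mono
      rintro p ⟨b, hbB, rest⟩
      exact ⟨b, hBV hbB, rest⟩
    · apply Ideal.span_le.2
      rintro p ⟨b, hbV, hb0, d, hd, rfl⟩
      exact Ideal.subset_span ⟨b, hVL (Finset.mem_coe.2 hbV), hb0, d, hd, rfl⟩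

end GB



section Final

variable {K : Type*} [Field K] {n : ℕ} {W : Type*} [Ring W] [Algebra K W]
  {ξ dd : Fin n → W} {Φ : W ≃ₗ[K] MvPolynomial (Fin n ⊕ Fin n) K}

lemma isClosed_NOSet (ξ dd : Fin n → W) : IsClosed (NOSet ξ dd) := by
  have hEq : NOSet ξ dd =
      (⋂ lam, ⋂ mu, USet (nmEl ξ dd 0 0) (nmEl ξ dd lam mu)) ∩
      (⋂ lam, ⋂ mu, ⋂ rho, ⋂ sig, ⋂ al, ⋂ be,
        {r : TO ↥(NormalMonomials ξ dd) |
          r.rel (nmEl ξ dd lam mu) (nmEl ξ dd rho sig) →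
          r.rel (nmEl ξ dd (lam+al) (mu+be)) (nmEl ξ dd (rho+al) (sig+be))}) := by
    ext r
    simp only [NOSet, Set.mem_setOf_eq, Set.mem_inter_iff, Set.mem_iInter, USet]
    exact Iff.rfl
  rw [hEq]
  refine IsClosed.inter ?_ ?_
  · exact isClosed_iInter fun lam => isClosed_iInter fun mu => TOaux.isClosed_USet _ _
  · exact isClosed_iInter fun lam => isClosed_iInter fun mu => isClosed_iInter fun rho =>
      isClosed_iInter fun sig => isClosed_iInter fun al => isClosed_iInter fun be =>
      TOaux.isClosed_imp _ _ _ _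

lemma exists_GB_nbhd [DecidableEq W] (hξ : ∀ i j, ξ i * ξ j = ξ j * ξ i)
    (hdd : ∀ i j, dd i * dd j = dd j * dd i)
    (hrel : ∀ i j, dd i * ξ j - ξ j * dd i = if i = j then (1:W) else 0)
    (hΦ : ∀ lam mu, Φ (nm ξ dd lam mu) = monomial (expof lam mu) 1)
    (L : Submodule W W) {r : TO ↥(NormalMonomials ξ dd)} (hr : r ∈ NOSet ξ dd) :
    ∃ B : Finset W, (B : Set W) ⊆ (L : Set W) ∧
      ∃ U : Set (TO ↥(NormalMonomials ξ dd)), IsOpen U ∧ r ∈ U ∧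
        ∀ r' ∈ NOSet ξ dd, r' ∈ U → IsGroebnerBasis ξ dd Φ r' L B := by
  classical
  have hrN : IsNormalOrdering ξ dd r := hr
  have hset : LTIdeal ξ dd Φ r (L : Set W)
      = Ideal.span ((fun d => monomial d (1:K)) ''
          {d | ∃ x, x ∈ (L : Set W) ∧ x ≠ 0 ∧ IsLTerm ξ dd Φ r x d}) := by
    unfold LTIdeal
    rw [lt_set_eq (Φ := Φ) r (fun x => x ∈ (L : Set W))]
  have hfg : (Ideal.span ((fun d => monomial d (1:K)) ''
      {d | ∃ x, x ∈ (L : Set W) ∧ x ≠ 0 ∧ IsLTerm ξ dd Φ r x d})).FG :=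
    IsNoetherian.noetherian _
  obtain ⟨T, hTsub, hTspan⟩ := exists_finset_span_eq _ hfg
  obtain ⟨D0, hD0sub, hD0img⟩ := Finset.subset_set_image_iff.1 hTsub
  have hpick : ∀ d ∈ D0, ∃ x : W, x ∈ L ∧ x ≠ 0 ∧ IsLTerm ξ dd Φ r x d := by
    intro d hd
    obtain ⟨x, hx1, hx2, hx3⟩ := hD0sub hd
    exact ⟨x, hx1, hx2, hx3⟩
  choose! F hF1 hF2 hF3 using hpick
  have hspan : Ideal.span ((fun d => monomial d (1:K)) ''
      (D0 : Set ((Fin n ⊕ Fin n) →₀ ℕ))) = LTIdeal ξ dd Φ r (L : Set W) := by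
    rw [hset]
    show Submodule.span (MvPolynomial (Fin n ⊕ Fin n) K)
        ((fun d => monomial d (1:K)) '' (D0 : Set ((Fin n ⊕ Fin n) →₀ ℕ)))
      = Submodule.span (MvPolynomial (Fin n ⊕ Fin n) K) _
    rw [← hTspan, ← hD0img, Finset.coe_image]
  refine ⟨D0.image F, ?_, ?_⟩
  · intro b hb
    rw [Finset.coe_image] at hb
    obtain ⟨d, hd, rfl⟩ := hb
    exact hF1 d hd
  refine ⟨⋂ d ∈ D0, ⋂ c ∈ (Φ (F d)).support, USet (nmD ξ dd c) (nmD ξ dd d), ?_, ?_, ?_⟩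
  · refine Set.Finite.isOpen_biInter (D0.finite_toSet) fun d _ => ?_
    exact Set.Finite.isOpen_biInter ((Φ (F d)).support.finite_toSet)
      fun c _ => TOaux.isOpen_USet _ _
  · rw [Set.mem_iInter₂]
    intro d hd
    rw [Set.mem_iInter₂]
    intro c hc
    exact (hF3 d hd).2 c hc
  · intro r2 hr2N hr2U
    rw [Set.mem_iInter₂] at hr2U
    have hF' : ∀ d ∈ D0, IsLTerm ξ dd Φ r2 (F d) d := by
      intro d hd
      have h1 := hr2U d hd
      rw [Set.mem_iInter₂] at h1
      exact ⟨(hF3 d hd).1, fun c hc => h1 c hc⟩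
    exact gb_nbhd hξ hdd hrel hΦ hrN hr2N L D0 F
      (fun d hd => ⟨hF1 d hd, hF2 d hd, hF3 d hd⟩) hspan hF'

end Final


/-- every left ideal `L` of `W` admits a universal Gröbner basis, i.e. a
finite subset `V ⊆ L` that is a Gröbner basis of `L` with respect to every normal ordering
`≼` of `W`. -/
theorem exists_universal_groebnerBasis
    {K : Type*} [Field K] [CharZero K] {n : ℕ} (hn : 1 ≤ n)
    {W : Type*} [Ring W] [Algebra K W] (ξ dd : Fin n → W)
    (hξcomm : ∀ i j, ξ i * ξ j = ξ j * ξ i)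
    (hddcomm : ∀ i j, dd i * dd j = dd j * dd i)
    (hrel : ∀ i j, dd i * ξ j - ξ j * dd i = if i = j then (1 : W) else 0)
    (Φ : W ≃ₗ[K] MvPolynomial (Fin n ⊕ Fin n) K)
    (hΦ : ∀ lam mu, Φ (nm ξ dd lam mu) = MvPolynomial.monomial (expof lam mu) 1)
    (L : Submodule W W) :
    ∃ V : Finset W, ∀ r : TO ↥(NormalMonomials ξ dd),
      IsNormalOrdering ξ dd r → IsGroebnerBasis ξ dd Φ r L V := by
  classical
  have hC : IsCompact (NOSet ξ dd) := (isClosed_NOSet ξ dd).isCompact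
  choose B hBL U hUopen hUmem hUgb using
    fun (i : {r : TO ↥(NormalMonomials ξ dd) // r ∈ NOSet ξ dd}) =>
      exists_GB_nbhd hξcomm hddcomm hrel hΦ L i.2
  have hcover : NOSet ξ dd ⊆ ⋃ i : {r // r ∈ NOSet ξ dd}, U i :=
    fun r hr => Set.mem_iUnion.2 ⟨⟨r, hr⟩, hUmem _⟩
  obtain ⟨t, ht⟩ := hC.elim_finite_subcover U hUopen hcover
  refine ⟨t.biUnion (fun i => B i), ?_⟩
  intro r hr
  have hrN : r ∈ NOSet ξ dd := hr
  obtain ⟨i, hit, hiU⟩ : ∃ i ∈ t, r ∈ U i := by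
    have h1 := ht hrN
    rw [Set.mem_iUnion₂] at h1
    obtain ⟨i, hi1, hi2⟩ := h1
    exact ⟨i, hi1, hi2⟩
  have hgb := hUgb i r hrN hiU
  refine gb_superset L (B i) _ (Finset.subset_biUnion_of_mem _ hit) ?_ hgb
  intro v hv
  rw [Finset.coe_biUnion] at hv
  simp only [Set.mem_iUnion] at hv
  obtain ⟨j, hj, hvj⟩ := hv
  exact hBL j hvj
end
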